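/- arXiv:1909.00770 — 12 statements merged into one kernel-verified Lean document; each statement's English description precedes it below -/
import Mathlib

section
/- For every real number c with |c| > 1, there exists a unique ω > 0 such that −c²ω² + 2 + 2cos(ω) = 0. Moreover, this unique positive zero ω satisfies √2/|c| < ω < π/2. -/
open Set

private lemma symbol_hasDerivAt (c ω : ℝ) :
    HasDerivAt (fun ω => -c ^ 2 * ω ^ 2 + 2 + 2 * Real.cos ω)
      (-c ^ 2 * (2 * ω) + 2 * (-Real.sin ω)) ω := by
  have h1 : HasDerivAt (fun ω : ℝ => ω ^ 2) (2 * ω) ω := by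
    simpa using hasDerivAt_pow 2 ω
  exact ((h1.const_mul (-c ^ 2)).add_const 2).add ((Real.hasDerivAt_cos ω).const_mul 2)

private lemma symbol_strictAntiOn (c : ℝ) (hc : 1 < |c|) :
    StrictAntiOn (fun ω => -c ^ 2 * ω ^ 2 + 2 + 2 * Real.cos ω) (Ici 0) := by
  have hc2 : 1 < c ^ 2 := by nlinarith [sq_abs c, abs_nonneg c]
  apply strictAntiOn_of_deriv_neg (convex_Ici 0)
  · fun_prop
  · intro x hx
    rw [interior_Ici] at hx
    rw [(symbol_hasDerivAt c x).deriv]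
    rcases lt_or_ge x 1 with h | h
    · have hπ := Real.pi_gt_three
      have hx' : (0:ℝ) < x := hx
      have : 0 < Real.sin x := Real.sin_pos_of_pos_of_lt_pi hx' (by linarith)
      nlinarith [mul_pos (show (0:ℝ) < c ^ 2 by linarith) hx']
    · have h1 : -1 ≤ Real.sin x := Real.neg_one_le_sin x
      nlinarith

/-- For every real `c` with `|c| > 1`, there is a unique `ω > 0` with
`-c²ω² + 2 + 2cos ω = 0`, and this unique positive zero satisfies
`√2/|c| < ω < π/2`. -/
theorem unique_positive_zero_of_symbol (c : ℝ) (hc : 1 < |c|) :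
    (∃! ω : ℝ, 0 < ω ∧ -c ^ 2 * ω ^ 2 + 2 + 2 * Real.cos ω = 0) ∧
    (∀ ω : ℝ, 0 < ω → -c ^ 2 * ω ^ 2 + 2 + 2 * Real.cos ω = 0 →
      Real.sqrt 2 / |c| < ω ∧ ω < Real.pi / 2) := by
  have hc2 : 1 < c ^ 2 := by nlinarith [sq_abs c, abs_nonneg c]
  have hπ := Real.pi_gt_three
  have hanti := symbol_strictAntiOn c hc
  set f : ℝ → ℝ := fun ω => -c ^ 2 * ω ^ 2 + 2 + 2 * Real.cos ω with hf
  have hf0 : f 0 = 4 := by simp [hf]; norm_num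
  have hfb : f (Real.pi / 2) < 0 := by
    simp only [hf, Real.cos_pi_div_two]
    nlinarith
  -- the bound claim
  have hbound : ∀ ω : ℝ, 0 < ω → f ω = 0 →
      Real.sqrt 2 / |c| < ω ∧ ω < Real.pi / 2 := by
    intro ω hω hfω
    have hωlt : ω < Real.pi / 2 := by
      by_contra h
      push_neg at h
      rcases eq_or_lt_of_le h with he | hlt
      · rw [← he] at hfω; linarith
      · have h3 := hanti (mem_Ici.2 (by linarith)) (mem_Ici.2 hω.le) hlt
        simp only [hf] at h3 hfω hfb
        linarith
    refine ⟨?_, hωlt⟩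
    have hcos : 0 < Real.cos ω := Real.cos_pos_of_mem_Ioo ⟨by linarith, hωlt⟩
    have h2 : 2 < c ^ 2 * ω ^ 2 := by
      have : -c ^ 2 * ω ^ 2 + 2 + 2 * Real.cos ω = 0 := hfω
      nlinarith
    have hcpos : (0 : ℝ) < |c| := by linarith
    rw [div_lt_iff₀ hcpos]
    rw [Real.sqrt_lt' (by positivity)]
    calc (2 : ℝ) < c ^ 2 * ω ^ 2 := h2
      _ = (ω * |c|) ^ 2 := by rw [mul_pow, sq_abs]; ring
  -- existence
  have hsub := intermediate_value_Icc' (by linarith : (0:ℝ) ≤ Real.pi / 2)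
    (by fun_prop : ContinuousOn f (Icc 0 (Real.pi / 2)))
  have h0mem : (0 : ℝ) ∈ Icc (f (Real.pi / 2)) (f 0) := ⟨hfb.le, by rw [hf0]; norm_num⟩
  obtain ⟨ω, hωmem, hfω⟩ := hsub h0mem
  have hωpos : 0 < ω := by
    rcases eq_or_lt_of_le hωmem.1 with he | h
    · exfalso; rw [← he] at hfω; rw [hf0] at hfω; norm_num at hfω
    · exact h
  constructor
  · refine ⟨ω, ⟨hωpos, hfω⟩, ?_⟩
    intro ω' ⟨hω', hfω'⟩
    have hfω'' : f ω' = 0 := hfω'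
    exact hanti.injOn (mem_Ici.2 hω'.le) (mem_Ici.2 hωpos.le) (by rw [hfω'', hfω])
  · exact hbound
end

section
/- There exists δ > 0 such that for every real number c with 1 < |c| ≤ √2, the derivative of B̃_c at its unique positive zero ω_c satisfies |B̃_c′(ω_c)| ≥ δ. That is, the infimum over 1 < |c| ≤ √2 of |B̃_c′(ω_c)| is strictly positive. -/
/-- There is `δ > 0` such that for every `c` with `1 < |c| ≤ √2`, the derivative
of `B̃_c(k) = -c²k² + 2 + 2cos k` at its unique positive zero `ω_c` satisfies
`|B̃_c′(ω_c)| ≥ δ`. -/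
theorem deriv_symbol_uniform_lower_bound :
    ∃ δ : ℝ, 0 < δ ∧ ∀ c ω : ℝ, 1 < |c| → |c| ≤ Real.sqrt 2 → 0 < ω →
      -c ^ 2 * ω ^ 2 + 2 + 2 * Real.cos ω = 0 →
      δ ≤ |deriv (fun k : ℝ => -c ^ 2 * k ^ 2 + 2 + 2 * Real.cos k) ω| := by
  refine ⟨1, one_pos, fun c ω hc hc2 hω hzero => ?_⟩
  -- compute the derivative
  have h1 : HasDerivAt (fun k : ℝ => -c ^ 2 * k ^ 2) (-c ^ 2 * (2 * ω)) ω := by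
    simpa [mul_comm] using ((hasDerivAt_pow 2 ω).const_mul (-c ^ 2))
  have h2 : HasDerivAt (fun k : ℝ => 2 * Real.cos k) (2 * (-Real.sin ω)) ω :=
    (Real.hasDerivAt_cos ω).const_mul 2
  have hD : HasDerivAt (fun k : ℝ => -c ^ 2 * k ^ 2 + 2 + 2 * Real.cos k)
      (-c ^ 2 * (2 * ω) + 2 * (-Real.sin ω)) ω := (h1.add_const 2).add h2
  rw [hD.deriv]
  -- basic bounds on c
  have hc1 : 1 < c ^ 2 := by
    have := sq_abs c; nlinarith [abs_nonneg c]
  have hcle : c ^ 2 ≤ 2 := by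
    have h := sq_abs c
    have h2' : |c| ^ 2 ≤ Real.sqrt 2 ^ 2 := by
      apply pow_le_pow_left₀ (abs_nonneg c) hc2
    rw [Real.sq_sqrt (by norm_num : (2:ℝ) ≥ 0)] at h2'
    linarith
  -- ω < 2
  have hcos_le : Real.cos ω ≤ 1 := Real.cos_le_one ω
  have hω2 : ω ^ 2 < 4 := by nlinarith
  have hωlt2 : ω < 2 := by nlinarith
  -- sin ω > 0
  have hsin : 0 < Real.sin ω :=
    Real.sin_pos_of_pos_of_lt_pi hω (by linarith [Real.pi_gt_three])
  -- cos ω ≥ cos 2 > -1/2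
  have hcos2 : Real.cos ω ≥ Real.cos 2 := by
    apply Real.cos_le_cos_of_nonneg_of_le_pi hω.le (by linarith [Real.pi_gt_three]) hωlt2.le
  have hcos1 : (1 : ℝ) / 2 < Real.cos 1 := by
    have := Real.one_sub_sq_div_two_lt_cos (x := 1) one_ne_zero
    norm_num at this
    linarith
  have hcos2v : (-1 : ℝ) / 2 < Real.cos 2 := by
    have h2m : Real.cos 2 = 2 * Real.cos 1 ^ 2 - 1 := by
      have := Real.cos_two_mul 1
      norm_num at this
      linarith
    nlinarith
  -- hence c²ω² > 1, so c²ω > 1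
  have hkey : 1 < c ^ 2 * ω ^ 2 := by nlinarith
  have hcω : 1 < c ^ 2 * ω := by nlinarith [sq_nonneg (c ^ 2 * ω - 1)]
  have : 1 ≤ -(-c ^ 2 * (2 * ω) + 2 * (-Real.sin ω)) := by nlinarith
  calc (1 : ℝ) ≤ -(-c ^ 2 * (2 * ω) + 2 * (-Real.sin ω)) := this
    _ ≤ |(-c ^ 2 * (2 * ω) + 2 * (-Real.sin ω))| := neg_le_abs _
end

section
/- The following three facts hold: (a) for every real k ≠ 0, sin(k)/k > −1/4; (b) for every real q with 0 < |q| ≤ 3, 2q/(e^{−q} − e^{q}) < −1/4; (c) consequently, for every real c with |c| > 1, every real k ≠ 0, and every real q with 0 < |q| ≤ 3, the quantity −2c²kq + (e^{−q} − e^{q})·sin(k) is nonzero. -/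
private lemma la_pos : ∀ k : ℝ, 0 < k → Real.sin k / k > -(1 / 4) := by
  intro k hk
  rcases le_or_gt k Real.pi with hle | hgt
  · have hs : 0 ≤ Real.sin k := Real.sin_nonneg_of_nonneg_of_le_pi hk.le hle
    have : 0 ≤ Real.sin k / k := div_nonneg hs hk.le
    linarith
  rcases le_or_gt k 4 with h4 | h4
  · have hpos : 0 < k - Real.pi := by linarith
    have hsl : Real.sin (k - Real.pi) < k - Real.pi := Real.sin_lt hpos
    have hrw : Real.sin (k - Real.pi) = -Real.sin k := Real.sin_sub_pi k
    have hsk : Real.sin k > -(k - Real.pi) := by rw [hrw] at hsl; linarith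
    have hpi : Real.pi > 3.141592 := Real.pi_gt_d6
    rw [gt_iff_lt, lt_div_iff₀ hk]
    nlinarith
  · have hs : -1 ≤ Real.sin k := Real.neg_one_le_sin k
    rw [gt_iff_lt, lt_div_iff₀ hk]
    nlinarith

private lemma la : ∀ k : ℝ, k ≠ 0 → Real.sin k / k > -(1 / 4) := by
  intro k hk
  rcases lt_or_gt_of_ne hk with hneg | hpos
  · have := la_pos (-k) (by linarith)
    rwa [Real.sin_neg, neg_div_neg_eq] at this
  · exact la_pos k hpos

private lemma exp_three_lt : Real.exp 3 < 22 := by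
  have h := Real.exp_one_lt_d9
  have h3 : Real.exp 3 = Real.exp 1 ^ 3 := by
    rw [← Real.exp_nat_mul]; norm_num
  have hpos : (0:ℝ) < Real.exp 1 := Real.exp_pos 1
  have hp : Real.exp 1 ^ 3 < 2.7182818286 ^ 3 :=
    pow_lt_pow_left₀ h hpos.le (by norm_num)
  rw [h3]; nlinarith

private lemma lb_pos : ∀ q : ℝ, 0 < q → q ≤ 3 → Real.exp q - Real.exp (-q) < 8 * q := by
  intro q hq hq3
  have hconv := convexOn_exp.2 (Set.mem_univ (0:ℝ)) (Set.mem_univ (3:ℝ))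
    (show (0:ℝ) ≤ 1 - q/3 by linarith) (show (0:ℝ) ≤ q/3 by linarith)
    (by ring)
  simp only [smul_eq_mul, mul_zero, zero_add, Real.exp_zero] at hconv
  have hconv' : Real.exp q ≤ (1 - q/3) + q/3 * Real.exp 3 := by
    have hq' : q/3 * 3 = q := by ring
    rw [hq'] at hconv
    linarith
  have hlow : -q + 1 ≤ Real.exp (-q) := Real.add_one_le_exp (-q)
  have h22 := exp_three_lt
  nlinarith

private lemma lb : ∀ q : ℝ, 0 < |q| → |q| ≤ 3 →
    2 * q / (Real.exp (-q) - Real.exp q) < -(1 / 4) := by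
  intro q hq0 hq3
  have hqne : q ≠ 0 := by intro h; simp [h] at hq0
  rcases lt_or_gt_of_ne hqne with hneg | hpos
  · rw [abs_of_neg hneg] at hq3
    have hb := lb_pos (-q) (by linarith) hq3
    have hs : 0 < Real.exp (-q) - Real.exp q := by
      have := Real.exp_lt_exp.2 (show q < -q by linarith)
      linarith
    rw [div_lt_iff₀ hs]
    simp only [neg_neg] at hb
    nlinarith
  · rw [abs_of_pos hpos] at hq3
    have hb := lb_pos q hpos hq3
    have hs : Real.exp (-q) - Real.exp q < 0 := by
      have := Real.exp_lt_exp.2 (show -q < q by linarith)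
      linarith
    rw [div_lt_iff_of_neg hs]
    nlinarith

/-- (a) `sin k / k > -1/4` for real `k ≠ 0`; (b) `2q/(e^{-q} - e^{q}) < -1/4`
for `0 < |q| ≤ 3`; (c) hence for `|c| > 1`, `k ≠ 0`, and `0 < |q| ≤ 3`, the
quantity `-2c²kq + (e^{-q} - e^{q}) sin k` is nonzero. -/
theorem imaginary_part_of_symbol_nonzero :
    (∀ k : ℝ, k ≠ 0 → Real.sin k / k > -(1 / 4)) ∧
    (∀ q : ℝ, 0 < |q| → |q| ≤ 3 →
      2 * q / (Real.exp (-q) - Real.exp q) < -(1 / 4)) ∧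
    (∀ c k q : ℝ, 1 < |c| → k ≠ 0 → 0 < |q| → |q| ≤ 3 →
      -2 * c ^ 2 * k * q + (Real.exp (-q) - Real.exp q) * Real.sin k ≠ 0) := by
  refine ⟨la, lb, ?_⟩
  intro c k q hc hk hq0 hq3
  set s := Real.exp (-q) - Real.exp q with hsdef
  have hqne : q ≠ 0 := by intro h; simp [h] at hq0
  -- facts about s
  have hsq : q * s < 0 ∧ s ^ 2 < 64 * q ^ 2 := by
    rcases lt_or_gt_of_ne hqne with hneg | hpos
    · have hq3' : -q ≤ 3 := by rwa [abs_of_neg hneg] at hq3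
      have hb := lb_pos (-q) (by linarith) hq3'
      simp only [neg_neg] at hb
      have hs : 0 < s := by
        have := Real.exp_lt_exp.2 (show q < -q by linarith)
        simp only [hsdef]; linarith
      constructor
      · exact mul_neg_of_neg_of_pos hneg hs
      · nlinarith
    · have hq3' : q ≤ 3 := by rwa [abs_of_pos hpos] at hq3
      have hb := lb_pos q hpos hq3'
      have hs : s < 0 := by
        have := Real.exp_lt_exp.2 (show -q < q by linarith)
        simp only [hsdef]; linarith
      constructor
      · exact mul_neg_of_pos_of_neg hpos hs
      · nlinarith
  obtain ⟨hqs, hs2⟩ := hsq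
  -- fact from (a)
  have ha := la k hk
  have hk2 : 0 < k ^ 2 := by positivity
  have hksin : 4 * (k * Real.sin k) + k ^ 2 > 0 := by
    rcases lt_or_gt_of_ne hk with hneg | hpos
    · rw [gt_iff_lt, lt_div_iff_of_neg hneg] at ha; nlinarith
    · rw [gt_iff_lt, lt_div_iff₀ hpos] at ha; nlinarith
  have hc2 : 1 < c ^ 2 := by
    have := abs_nonneg c
    nlinarith [sq_abs c]
  intro heq
  -- sign analysis
  have hq2 : 0 < q ^ 2 := by positivity
  rcases lt_trichotomy (k * q) 0 with hkq | hkq | hkq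
  · -- q*s<0 so k*s > 0
    have hks : 0 < k * s := by nlinarith [sq_nonneg (k*s + q*s), sq_nonneg (k*q)]
    have h1 : 8 * c ^ 2 * (k ^ 3 * q) + k ^ 3 * s > 0 := by
      nlinarith [mul_pos hks hksin]
    have h2 : k * s < -8 * (k * q) := by
      nlinarith [mul_lt_mul_of_pos_left hs2 hk2]
    have h2' : k ^ 2 * (k * s) < k ^ 2 * (-8 * (k * q)) :=
      mul_lt_mul_of_pos_left h2 hk2
    have h3 : (k ^ 2 * (k * q)) * (c ^ 2 - 1) < 0 :=
      mul_neg_of_neg_of_pos (mul_neg_of_pos_of_neg hk2 hkq) (by linarith)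
    nlinarith
  · exact absurd hkq (by positivity)
  · have hks : k * s < 0 := by nlinarith [sq_nonneg (k*s - q*s), sq_nonneg (k*q)]
    have h1 : 8 * c ^ 2 * (k ^ 3 * q) + k ^ 3 * s < 0 := by
      nlinarith [mul_neg_of_neg_of_pos hks hksin]
    have h2 : -8 * (k * q) < k * s := by
      nlinarith [mul_lt_mul_of_pos_left hs2 hk2]
    have h2' : k ^ 2 * (-8 * (k * q)) < k ^ 2 * (k * s) :=
      mul_lt_mul_of_pos_left h2 hk2
    have h3 : 0 < (k ^ 2 * (k * q)) * (c ^ 2 - 1) :=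
      mul_pos (mul_pos hk2 hkq) (by linarith)
    nlinarith
end

section
/- For every real number c with |c| > 1 and every complex number z with 0 < |Im z| ≤ 3, one has B̃_c(z) = −c²z² + 2 + 2cos(z) ≠ 0, where cos denotes the complex cosine. In other words, B̃_c has no zeros in the closed strip {|Im z| ≤ 3} off the real axis. -/
open Real

lemma aux_sinh_convex : ConvexOn ℝ (Set.Ici (0:ℝ)) Real.sinh := by
  apply convexOn_of_deriv2_nonneg (convex_Ici 0) Real.continuous_sinh.continuousOn
    Real.differentiable_sinh.differentiableOn
  · rw [Real.deriv_sinh]; exact Real.differentiable_cosh.differentiableOn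
  · intro t ht
    have h2 : deriv^[2] Real.sinh = Real.sinh := by
      ext s
      simp [Function.iterate_succ, Real.deriv_sinh, Real.deriv_cosh]
    rw [h2]
    rw [interior_Ici, Set.mem_Ioi] at ht
    exact Real.sinh_nonneg_iff.2 ht.le

lemma aux_sinh_le {t : ℝ} (h0 : 0 ≤ t) (h3 : t ≤ 3) : 3 * Real.sinh t ≤ t * Real.sinh 3 := by
  have h := aux_sinh_convex.2 (Set.mem_Ici.2 (le_refl (0:ℝ)))
    (Set.mem_Ici.2 (by norm_num : (0:ℝ) ≤ 3))
    (by linarith : (0:ℝ) ≤ 1 - t/3) (by linarith : (0:ℝ) ≤ t/3) (by ring : (1 - t/3) + t/3 = 1)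
  simp only [smul_eq_mul, mul_zero, zero_add, Real.sinh_zero] at h
  have e : t/3 * 3 = t := by ring
  rw [e] at h
  nlinarith [h]

lemma aux_sin_bound {x : ℝ} (hx : x * Real.sin x < 0) :
    (Real.pi + 1) * |Real.sin x| ≤ |x| := by
  have hpi := Real.pi_gt_three
  -- reduce to a := |x|
  have hax : |x| * Real.sin |x| = x * Real.sin x := by
    rcases abs_cases x with ⟨h1, _⟩ | ⟨h1, _⟩ <;> rw [h1] <;> simp [Real.sin_neg]
  have hsa : abs (Real.sin |x|) = |Real.sin x| := by
    rcases abs_cases x with ⟨h1, _⟩ | ⟨h1, _⟩ <;> rw [h1] <;> simp [Real.sin_neg]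
  set a := |x| with ha
  rw [← hsa]
  have haneg : a * Real.sin a < 0 := by rw [hax]; exact hx
  have ha0 : 0 < a := by
    rcases lt_trichotomy a 0 with h | h | h
    · exact absurd h (not_lt.2 (abs_nonneg x))
    · rw [h] at haneg; simp at haneg
    · exact h
  have hsneg : Real.sin a < 0 := by
    nlinarith
  have hapi : Real.pi < a := by
    by_contra hle
    push_neg at hle
    exact absurd (Real.sin_nonneg_of_nonneg_of_le_pi ha0.le hle) (not_le.2 hsneg)
  have habs : |Real.sin a| = -Real.sin a := abs_of_neg hsneg
  rcases le_or_gt (Real.pi + 1) a with hcase | hcase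
  · have h1 : |Real.sin a| ≤ 1 := Real.abs_sin_le_one a
    nlinarith
  · -- π < a < π + 1
    have hkey : -Real.sin a ≤ a - Real.pi := by
      have h1 : Real.sin (a - Real.pi) = -Real.sin a := Real.sin_sub_pi a
      have h2 : Real.sin (a - Real.pi) ≤ a - Real.pi := Real.sin_le (by linarith)
      linarith
    rw [habs]
    nlinarith

lemma aux_sinh3 : Real.sinh 3 < 3 * (Real.pi + 1) := by
  have hpi := Real.pi_gt_three
  have he : Real.exp 1 < 2.7182818286 := Real.exp_one_lt_d9
  have he0 : 0 < Real.exp 1 := Real.exp_pos 1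
  have h3 : Real.exp 3 = Real.exp 1 * Real.exp 1 * Real.exp 1 := by
    rw [← Real.exp_add, ← Real.exp_add]; norm_num
  have hexp3 : Real.exp 3 < 20.1 := by
    rw [h3]; nlinarith
  have hneg : 0 < Real.exp (-3) := Real.exp_pos _
  rw [Real.sinh_eq]
  nlinarith

/-- For `|c| > 1` and any complex `z` with `0 < |Im z| ≤ 3`, one has
`B̃_c(z) = -c²z² + 2 + 2cos z ≠ 0`: the symbol has no zeros in the closed strip
`{|Im z| ≤ 3}` off the real axis. -/
theorem symbol_nonzero_off_real_axis (c : ℝ) (hc : 1 < |c|) (z : ℂ)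
    (h0 : 0 < |z.im|) (h3 : |z.im| ≤ 3) :
    -(c : ℂ) ^ 2 * z ^ 2 + 2 + 2 * Complex.cos z ≠ 0 := by
  intro h
  set x := z.re with hx
  set y := z.im with hy
  have hcos : Complex.cos z =
      ((Real.cos x * Real.cosh y : ℝ) : ℂ) + ((-(Real.sin x * Real.sinh y) : ℝ) : ℂ) * Complex.I := by
    conv_lhs => rw [← Complex.re_add_im z]
    rw [Complex.cos_add, Complex.cos_mul_I, Complex.sin_mul_I,
      ← Complex.ofReal_cos, ← Complex.ofReal_sin, ← Complex.ofReal_cosh, ← Complex.ofReal_sinh]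
    push_cast
    ring
  rw [hcos] at h
  conv at h => rw [← Complex.re_add_im z]
  rw [Complex.ext_iff] at h
  obtain ⟨hre, him⟩ := h
  simp only [Complex.add_re, Complex.add_im, Complex.mul_re, Complex.mul_im, Complex.neg_re,
    Complex.neg_im, Complex.I_re, Complex.I_im, Complex.ofReal_re, Complex.ofReal_im,
    Complex.zero_re, Complex.zero_im, pow_two] at hre him
  norm_num at hre him
  rw [← hx, ← hy] at hre him
  -- hre : -(c*c*(x*x - y*y)) + 2 + 2*(cos x * cosh y) = 0
  -- him : -(c*c*(x*y + y*x)) + -(2*(sin x * sinh y)) = 0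
  have hy0 : y ≠ 0 := by
    intro hh
    rw [hh] at h0
    simp at h0
  have hc2 : 1 < c ^ 2 := by nlinarith [sq_abs c, hc, abs_nonneg c]
  have hcoshy : 1 ≤ Real.cosh y := Real.one_le_cosh y
  have hysy : 0 < y * Real.sinh y := by
    rcases lt_or_gt_of_ne hy0 with hlt | hgt
    · have : Real.sinh y < 0 := Real.sinh_neg_iff.2 hlt
      nlinarith
    · have : 0 < Real.sinh y := Real.sinh_pos_iff.2 hgt
      nlinarith
  by_cases hx0 : x = 0
  · rw [hx0] at hre
    norm_num at hre
    nlinarith [sq_nonneg y, mul_pos (mul_self_pos.2 hy0) (lt_trans one_pos hc2)]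
  · have him2 : c ^ 2 * (x * y) = -(Real.sin x * Real.sinh y) := by
      rw [pow_two]; linarith
    have hsx : Real.sin x ≠ 0 := by
      intro hs
      rw [hs] at him2
      simp at him2
      rcases him2 with h | h | h
      · nlinarith
      · exact hx0 h
      · exact hy0 h
    have hxsin : x * Real.sin x < 0 := by
      have hk : c ^ 2 * (x * Real.sin x) * y ^ 2 = -((Real.sin x) ^ 2 * (y * Real.sinh y)) := by
        linear_combination (Real.sin x * y) * him2
      have hs2 : 0 < Real.sin x ^ 2 := by positivity
      have hy2 : 0 < y ^ 2 := by positivity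
      nlinarith [mul_pos hs2 hysy, mul_pos (lt_trans one_pos hc2) hy2]
    have hsinh_abs : |Real.sinh y| = Real.sinh |y| := by
      rcases le_or_gt 0 y with hle | hlt
      · rw [abs_of_nonneg hle, abs_of_nonneg (Real.sinh_nonneg_iff.2 hle)]
      · rw [abs_of_neg hlt, abs_of_neg (Real.sinh_neg_iff.2 hlt), ← Real.sinh_neg]
    have habs : c ^ 2 * (|x| * |y|) = |Real.sin x| * Real.sinh |y| := by
      have h1 := congrArg abs him2
      rw [abs_neg, abs_mul, abs_mul, abs_mul, abs_of_pos (lt_trans one_pos hc2),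
        hsinh_abs] at h1
      linarith [h1]
    have A : 3 * Real.sinh |y| ≤ |y| * Real.sinh 3 := aux_sinh_le (abs_nonneg y) h3
    have B : (Real.pi + 1) * |Real.sin x| ≤ |x| := aux_sin_bound hxsin
    have C : Real.sinh 3 < 3 * (Real.pi + 1) := aux_sinh3
    have hx_pos : 0 < |x| := abs_pos.2 hx0
    have hsx_pos : 0 < |Real.sin x| := abs_pos.2 hsx
    nlinarith [mul_le_mul_of_nonneg_left A (abs_nonneg (Real.sin x)),
      mul_lt_mul_of_pos_left C (mul_pos hsx_pos h0),
      mul_le_mul_of_nonneg_left B h0.le,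
      mul_pos hx_pos h0, mul_pos (mul_pos hx_pos h0) (lt_trans one_pos hc2)]
end

section
/- Let c be a real number with |c| > 1 and let ω_c be the unique positive real zero of B̃_c. Then there exists a function g, holomorphic on the open strip S = {z ∈ ℂ : |Im z| < 3}, such that g(z) ≠ 0 for every z ∈ S and B̃_c(z) = (z − ω_c)(z + ω_c)·g(z) for every z ∈ S. In particular, 1/B̃_c is meromorphic on S, and its only poles there are z = ω_c and z = −ω_c, each of which is simple. -/
open Real

namespace SymbolFactorizationAux

lemma E_sq : Real.exp (3/2) ^ 2 = Real.exp 3 := by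
  rw [← Real.exp_nat_mul]; norm_num

lemma exp3_bounds : (20.085:ℝ) ≤ Real.exp 3 ∧ Real.exp 3 ≤ 20.086 := by
  have h : Real.exp 3 = Real.exp 1 ^ 3 := by rw [← Real.exp_nat_mul]; norm_num
  have h1 := Real.exp_one_gt_d9
  have h2 := Real.exp_one_lt_d9
  constructor <;> rw [h]
  · calc (20.085:ℝ) ≤ 2.7182818283 ^ 3 := by norm_num
      _ ≤ Real.exp 1 ^ 3 := by gcongr
  · calc Real.exp 1 ^ 3 ≤ 2.7182818286 ^ 3 := by gcongr
      _ ≤ 20.086 := by norm_num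

lemma E_lb : (4.48:ℝ) ≤ Real.exp (3/2) := by
  nlinarith [E_sq, exp3_bounds.1, Real.exp_pos (3/2 : ℝ)]

lemma E_ub : Real.exp (3/2) ≤ 4.49 := by
  nlinarith [E_sq, exp3_bounds.2, Real.exp_pos (3/2 : ℝ)]

lemma Einv_lb : (0.2227:ℝ) ≤ Real.exp (-(3/2)) := by
  rw [Real.exp_neg, inv_eq_one_div, le_div_iff₀ (Real.exp_pos _)]
  nlinarith [E_ub]

lemma Einv_ub : Real.exp (-(3/2)) ≤ 0.2233 := by
  rw [Real.exp_neg, inv_eq_one_div, div_le_iff₀ (Real.exp_pos _)]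
  nlinarith [E_lb]

lemma sinh15_lb : (2.128:ℝ) ≤ Real.sinh (3/2) := by
  rw [Real.sinh_eq]; nlinarith [E_lb, Einv_ub]
lemma sinh15_ub : Real.sinh (3/2) ≤ 15/7 := by
  rw [Real.sinh_eq]; nlinarith [E_ub, Einv_lb]
lemma cosh15_ub : Real.cosh (3/2) ≤ 2.36 := by
  rw [Real.cosh_eq]; nlinarith [E_ub, Einv_ub]
lemma N2 : (3/2:ℝ) * Real.cosh (3/2) ≤ 1.67 * Real.sinh (3/2) := by
  nlinarith [cosh15_ub, sinh15_lb]

lemma L1 {s : ℝ} (h0 : 0 < s) (h1 : s < 3/2) :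
    (3/2:ℝ) * Real.sinh s ≤ s * Real.sinh (3/2) := by
  set ψ : ℝ → ℝ := fun t => t * Real.sinh (3/2) - (3/2) * Real.sinh t with hψ
  have hd1 : deriv ψ = fun t => Real.sinh (3/2) - (3/2) * Real.cosh t := by
    funext t
    exact (((hasDerivAt_id t).mul_const _).sub ((Real.hasDerivAt_sinh t).const_mul (3/2))).deriv.trans (by ring)
  have hd2 : ∀ t : ℝ, deriv^[2] ψ t = -(3/2) * Real.sinh t := by
    intro t
    rw [Function.iterate_succ, Function.iterate_one, Function.comp_apply, hd1]
    exact (((hasDerivAt_const t _).sub ((Real.hasDerivAt_cosh t).const_mul (3/2)))).deriv.trans (by ring)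
  have hconc : StrictConcaveOn ℝ (Set.Icc 0 (3/2)) ψ := by
    apply strictConcaveOn_of_deriv2_neg (convex_Icc _ _)
    · fun_prop
    · intro x hx
      rw [interior_Icc] at hx
      rw [hd2]
      nlinarith [Real.sinh_pos_iff.2 hx.1]
  have key := hconc.2 (Set.left_mem_Icc.2 (by norm_num)) (Set.right_mem_Icc.2 (by norm_num))
    (by norm_num : (0:ℝ) ≠ 3/2)
    (show (0:ℝ) < 1 - s/(3/2) by nlinarith) (show (0:ℝ) < s/(3/2) by positivity) (by ring)
  have hsval : (1 - s/(3/2)) • (0:ℝ) + (s/(3/2)) • (3/2:ℝ) = s := by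
    field_simp
    simp only [smul_eq_mul]; ring
  rw [hsval] at key
  have : (0:ℝ) < ψ s := by
    have hψ0 : ψ 0 = 0 := by simp [hψ]
    have hψ32 : ψ (3/2) = 0 := by simp [hψ]
    rw [hψ0, hψ32] at key; simpa using key
  simp only [hψ] at this; linarith

lemma L2 {s : ℝ} (h0 : 0 < s) (h1 : s < 3/2) :
    s * Real.cosh s ≤ 1.67 * Real.sinh s := by
  set φ : ℝ → ℝ := fun t => 1.67 * Real.sinh t - t * Real.cosh t with hφ
  have hd1 : deriv φ = fun t => 0.67 * Real.cosh t - t * Real.sinh t := by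
    funext t
    exact (((Real.hasDerivAt_sinh t).const_mul _).sub
      ((hasDerivAt_id t).mul (Real.hasDerivAt_cosh t))).deriv.trans (by norm_num; ring)
  have hd2 : ∀ t : ℝ, deriv^[2] φ t = -0.33 * Real.sinh t - t * Real.cosh t := by
    intro t
    rw [Function.iterate_succ, Function.iterate_one, Function.comp_apply, hd1]
    exact (((Real.hasDerivAt_cosh t).const_mul _).sub
      ((hasDerivAt_id t).mul (Real.hasDerivAt_sinh t))).deriv.trans (by norm_num; ring)
  have hconc : StrictConcaveOn ℝ (Set.Icc 0 (3/2)) φ := by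
    apply strictConcaveOn_of_deriv2_neg (convex_Icc _ _)
    · fun_prop
    · intro x hx
      rw [interior_Icc] at hx
      rw [hd2]
      nlinarith [Real.sinh_pos_iff.2 hx.1, mul_pos hx.1 (Real.cosh_pos (x := x))]
  have key := hconc.2 (Set.left_mem_Icc.2 (by norm_num)) (Set.right_mem_Icc.2 (by norm_num))
    (by norm_num : (0:ℝ) ≠ 3/2)
    (show (0:ℝ) < 1 - s/(3/2) by nlinarith) (show (0:ℝ) < s/(3/2) by positivity) (by ring)
  have hsval : (1 - s/(3/2)) • (0:ℝ) + (s/(3/2)) • (3/2:ℝ) = s := by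
    field_simp
    simp only [smul_eq_mul]; ring
  rw [hsval] at key
  have hφ0 : φ 0 = 0 := by simp [hφ]
  have hφ32 : 0 ≤ φ (3/2) := by
    simp only [hφ]; nlinarith [N2]
  have : (0:ℝ) < φ s := by
    rw [hφ0] at key
    simp only [smul_eq_mul, mul_zero, zero_add] at key
    have h32 : (0:ℝ) ≤ s/(3/2) := by positivity
    exact lt_of_le_of_lt (mul_nonneg h32 hφ32) key
  simp only [hφ] at this; linarith

set_option maxHeartbeats 1000000 in
lemma no_complex_zero {a v s : ℝ} (ha : 1 < a) (hs0 : 0 < s) (hs1 : s < 3/2)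
    (eqR : Real.cos v * Real.cosh s = a * v)
    (eqI : Real.sin v * Real.sinh s = -(a * s)) : False := by
  have hsh : 0 < Real.sinh s := Real.sinh_pos_iff.2 hs0
  have hch1 : (1:ℝ) ≤ Real.cosh s := Real.one_le_cosh s
  have hchU : Real.cosh s ≤ 2.36 := by
    refine le_trans ?_ cosh15_ub
    rw [Real.cosh_le_cosh]
    rw [abs_of_pos hs0, abs_of_pos (by norm_num : (0:ℝ) < 3/2)]
    exact hs1.le
  -- sin v < 0
  have hsv : Real.sin v < 0 := by
    nlinarith [mul_pos (lt_trans one_pos ha) hs0]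
  -- |v| < π
  have hvabs : |v| < π := by
    have h1 : a * |v| = |Real.cos v| * Real.cosh s := by
      rw [← abs_of_pos (lt_trans one_pos ha), ← abs_mul, ← eqR, abs_mul,
        abs_of_pos (lt_of_lt_of_le one_pos hch1)]
    have h2 : |Real.cos v| ≤ 1 := Real.abs_cos_le_one v
    have h3 : a * |v| ≤ 2.36 := by nlinarith [abs_nonneg v]
    have h4 : |v| ≤ 2.36 := by nlinarith [abs_nonneg v]
    linarith [Real.pi_gt_d6]
  -- v < 0
  have hv0 : v < 0 := by
    by_contra h
    push_neg at h
    have : 0 ≤ Real.sin v := Real.sin_nonneg_of_nonneg_of_le_pi h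
      (le_of_lt (lt_of_le_of_lt (le_abs_self v) hvabs))
    linarith
  -- cos v < 0
  have hcv : Real.cos v < 0 := by nlinarith
  -- v < -π/2
  have hv2 : v < -(π/2) := by
    by_contra h
    push_neg at h
    have : 0 ≤ Real.cos v := Real.cos_nonneg_of_mem_Icc ⟨by linarith, by linarith [Real.pi_pos]⟩
    linarith
  set β := π + v with hβ
  have hβ0 : 0 < β := by rw [hβ]; linarith [neg_lt_of_abs_lt hvabs]
  have hβ2 : β < π/2 := by rw [hβ]; linarith
  have hsinβ : Real.sin β = -Real.sin v := by
    rw [hβ, Real.sin_add]; simp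
  have hcosβ : Real.cos β = -Real.cos v := by
    rw [hβ, Real.cos_add]; simp
  have hsinβ_eq : Real.sin β * Real.sinh s = a * s := by rw [hsinβ]; linarith [eqI]
  have hcosβ_eq : Real.cos β * Real.cosh s = a * (π - β) := by
    rw [hcosβ, hβ]; nlinarith [eqR]
  have hsinβpos : 0 < Real.sin β := by rw [hsinβ]; linarith
  have hcosβpos : 0 < Real.cos β :=
    Real.cos_pos_of_mem_Ioo ⟨by linarith [Real.pi_pos], hβ2⟩
  -- D1 : 0.7 < sin β
  have hD1 : 0.7 < Real.sin β := by
    have l1 := L1 hs0 hs1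
    have := sinh15_ub
    nlinarith [hsinβ_eq, mul_pos (lt_trans one_pos ha) hs0]
  -- D2 : cos β ≤ 0.7142
  have hD2 : Real.cos β ≤ 0.7142 := by
    nlinarith [Real.sin_sq_add_cos_sq β]
  -- D3 : β > π - 1.6856
  have hD3 : π - 1.6856 < β := by
    nlinarith [hcosβ_eq]
  -- D4 : β * cos β < sin β
  have hD4 : β * Real.cos β < Real.sin β := by
    have ht := Real.lt_tan hβ0 hβ2
    rw [Real.tan_eq_sin_div_cos] at ht
    calc β * Real.cos β < (Real.sin β / Real.cos β) * Real.cos β := by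
          exact mul_lt_mul_of_pos_right ht hcosβpos
      _ = Real.sin β := by field_simp
  -- final
  have hL2 := L2 hs0 hs1
  have ha0 : (0:ℝ) < a := lt_trans one_pos ha
  have hfin : Real.sin β * (π - β) ≤ 1.67 * Real.cos β := by
    have key : (Real.sin β * (π - β)) * (a * Real.sinh s) ≤ (1.67 * Real.cos β) * (a * Real.sinh s) := by
      have e1 : (Real.sin β * (π - β)) * (a * Real.sinh s) = (a*s) * (a*(π - β)) := by
        linear_combination (a*(π - β)) * hsinβ_eq
      have e2 : (a*s) * (a*(π - β)) = (a * Real.cos β) * (s * Real.cosh s) := by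
        linear_combination (a*s) * hcosβ_eq.symm
      have e3 : (a * Real.cos β) * (s * Real.cosh s) ≤ (a * Real.cos β) * (1.67 * Real.sinh s) :=
        mul_le_mul_of_nonneg_left hL2 (mul_pos ha0 hcosβpos).le
      calc (Real.sin β * (π - β)) * (a * Real.sinh s) = (a * Real.cos β) * (s * Real.cosh s) := by
            rw [e1, e2]
        _ ≤ (a * Real.cos β) * (1.67 * Real.sinh s) := e3
        _ = (1.67 * Real.cos β) * (a * Real.sinh s) := by ring
    exact (mul_le_mul_iff_of_pos_right (mul_pos ha0 hsh)).1 key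
  have hπβ : 0 < π - β := by linarith
  have step1 : β * Real.cos β * (π - β) < Real.sin β * (π - β) :=
    mul_lt_mul_of_pos_right hD4 hπβ
  have step3 : β * (π - β) < 1.67 := by
    have step2 : (β * (π - β)) * Real.cos β < 1.67 * Real.cos β := by
      calc (β * (π - β)) * Real.cos β = β * Real.cos β * (π - β) := by ring
        _ < Real.sin β * (π - β) := step1
        _ ≤ 1.67 * Real.cos β := hfin
    exact (mul_lt_mul_iff_of_pos_right hcosβpos).1 step2
  have hπ : (3.1415:ℝ) < π := by linarith [Real.pi_gt_d6]
  have h8 : (1.4559:ℝ) < β := by linarith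
  have h9 : (1.5707:ℝ) < π - β := by linarith
  nlinarith [step3, h8, h9]

lemma real_zero_unique {a x ω : ℝ} (ha : 1 < a)
    (h1 : 2 * Real.cos (ω/2) = a * ω) (h2 : 2 * Real.cos (x/2) = a * x) : x = ω := by
  have hcc := Real.cos_sub_cos (x/2) (ω/2)
  have hdiff : a * (x - ω) = -4 * Real.sin ((x/2 + ω/2)/2) * Real.sin ((x/2 - ω/2)/2) := by
    linarith [hcc]
  have h3 : |Real.sin ((x/2 - ω/2)/2)| ≤ |x - ω|/4 := by
    calc |Real.sin ((x/2 - ω/2)/2)| ≤ |(x/2 - ω/2)/2| := Real.abs_sin_le_abs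
      _ = |x - ω|/4 := by rw [show (x/2 - ω/2)/2 = (x-ω)/4 by ring, abs_div]; norm_num
  have h4 : a * |x - ω| ≤ |x - ω| := by
    have e : a * |x - ω| = |a * (x - ω)| := by
      rw [abs_mul, abs_of_pos (lt_trans one_pos ha)]
    rw [e, hdiff, abs_mul, abs_mul]
    have h5 : |Real.sin ((x/2 + ω/2)/2)| ≤ 1 := Real.abs_sin_le_one _
    have h6 : (0:ℝ) ≤ |Real.sin ((x/2 - ω/2)/2)| := abs_nonneg _
    calc |(-4:ℝ)| * |Real.sin ((x/2 + ω/2)/2)| * |Real.sin ((x/2 - ω/2)/2)|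
        ≤ 4 * 1 * (|x - ω|/4) := by
          apply mul_le_mul _ h3 h6 (by norm_num)
          rw [show |(-4:ℝ)| = 4 by norm_num]
          nlinarith [abs_nonneg (Real.sin ((x/2 + ω/2)/2))]
      _ = |x - ω| := by ring
  have h7 : |x - ω| ≤ 0 := by nlinarith [abs_nonneg (x - ω)]
  have h8 := abs_nonneg (x - ω)
  have h9 : x - ω = 0 := by rw [← abs_eq_zero]; linarith
  linarith

lemma f1_zero_classify {a ω : ℝ} (ha : 1 < a) (hωkey : 2 * Real.cos (ω/2) = a * ω)
    {z : ℂ} (hz : |z.im| < 3) (hzero : 2 * Complex.cos (z/2) = (a:ℂ) * z) : z = (ω:ℂ) := by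
  set x := z.re with hx
  set y := z.im with hy
  have hz2 : (z/2 : ℂ) = (↑(x/2) + ↑(y/2) * Complex.I) := by
    rw [← Complex.re_add_im z]; push_cast; ring
  rw [hz2, Complex.cos_add_mul_I, ← Complex.ofReal_cos, ← Complex.ofReal_sin,
    ← Complex.ofReal_cosh, ← Complex.ofReal_sinh] at hzero
  have hre := congrArg Complex.re hzero
  have him := congrArg Complex.im hzero
  simp only [Complex.mul_re, Complex.mul_im, Complex.sub_re, Complex.sub_im,
    Complex.ofReal_re, Complex.ofReal_im, Complex.mul_I_re, Complex.mul_I_im,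
    Complex.I_re, Complex.I_im, Complex.re_ofNat, Complex.im_ofNat,
    mul_zero, zero_mul, mul_one, one_mul, sub_zero, zero_sub, add_zero, zero_add, neg_zero,
    neg_neg, neg_mul, mul_neg] at hre him
  rw [← hx] at hre
  rw [← hy] at him
  by_cases hy0 : y = 0
  · -- real case
    rw [hy0] at hre
    norm_num at hre
    have hxeq : 2 * Real.cos (x/2) = a * x := by linarith
    have hxω : x = ω := real_zero_unique ha hωkey hxeq
    have : z = (x:ℂ) := by
      apply Complex.ext <;> simp [← hx, ← hy, hy0]
    rw [this, hxω]
  · -- complex case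
    exfalso
    have hs0 : 0 < |y|/2 := by positivity
    have hs1 : |y|/2 < 3/2 := by linarith [hz]
    have eqR : Real.cos (x/2) * Real.cosh (|y|/2) = a * (x/2) := by
      rw [show |y|/2 = |y/2| by rw [abs_div]; norm_num, Real.cosh_abs]
      linarith
    have eqI : Real.sin (x/2) * Real.sinh (|y|/2) = -(a * (|y|/2)) := by
      rcases lt_or_gt_of_ne hy0 with hneg | hpos
      · rw [show |y|/2 = -(y/2) by rw [abs_of_neg hneg]; ring, Real.sinh_neg]
        have hay : |y| = -y := abs_of_neg hneg
        nlinarith [him]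
      · rw [abs_of_pos hpos]
        linarith
    exact no_complex_zero ha hs0 hs1 eqR eqI

end SymbolFactorizationAux

open SymbolFactorizationAux

/-- For `|c| > 1` and `ω` the unique positive real zero of `B̃_c`, there is a
function `g` holomorphic and nonvanishing on the open strip `{|Im z| < 3}`
such that `B̃_c(z) = (z - ω)(z + ω) g(z)` there.  In particular `1/B̃_c` is
meromorphic on the strip with only simple poles at `±ω`. -/
theorem symbol_factorization_on_strip (c ω : ℝ) (hc : 1 < |c|) (hω : 0 < ω)
    (hzero : -c ^ 2 * ω ^ 2 + 2 + 2 * Real.cos ω = 0) :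
    ∃ g : ℂ → ℂ,
      DifferentiableOn ℂ g {z : ℂ | |z.im| < 3} ∧
      ∀ z ∈ {z : ℂ | |z.im| < 3}, g z ≠ 0 ∧
        -(c : ℂ) ^ 2 * z ^ 2 + 2 + 2 * Complex.cos z
          = (z - (ω : ℂ)) * (z + (ω : ℂ)) * g z := by
  set a : ℝ := |c| with haabs
  have ha : 1 < a := hc
  have ha2 : a ^ 2 = c ^ 2 := sq_abs c
  have hc2 : 1 < c ^ 2 := by rw [← ha2]; nlinarith
  -- ω < π/2
  have hcos1 : Real.cos ω ≤ 1 := Real.cos_le_one ω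
  have hω4 : c ^ 2 * ω ^ 2 ≤ 4 := by nlinarith
  have hω2lt : ω < 2 := by
    nlinarith [mul_pos (show (0:ℝ) < c^2 - 1 by linarith) (show (0:ℝ) < ω^2 by positivity), sq_nonneg (ω - 2)]
  have hωπ : ω < π/2 := by
    by_contra h
    push_neg at h
    have hπ : (3.14:ℝ) < π := by linarith [Real.pi_gt_d6]
    have hcosneg : Real.cos ω ≤ 0 :=
      Real.cos_nonpos_of_pi_div_two_le_of_le h (by linarith)
    nlinarith
  -- key : 2 cos(ω/2) = a ω
  have hkey : 2 * Real.cos (ω/2) = a * ω := by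
    have hsq : (2 * Real.cos (ω/2))^2 = (a * ω)^2 := by
      have hcs := Real.cos_sq (ω/2)
      rw [show 2*(ω/2) = ω by ring] at hcs
      nlinarith
    have hcpos : 0 < Real.cos (ω/2) := by
      apply Real.cos_pos_of_mem_Ioo
      constructor
      · linarith [Real.pi_pos]
      · linarith [Real.pi_pos]
    have h1 : 0 < 2 * Real.cos (ω/2) := by linarith
    have h2 : 0 < a * ω := by positivity
    nlinarith [sq_nonneg (2 * Real.cos (ω/2) - a * ω), sq_nonneg (2 * Real.cos (ω/2) + a * ω)]
  -- complex functions
  set f₁ : ℂ → ℂ := fun z => 2 * Complex.cos (z/2) - (a:ℂ) * z with hf₁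
  set f₂ : ℂ → ℂ := fun z => 2 * Complex.cos (z/2) + (a:ℂ) * z with hf₂
  have hdiff1 : Differentiable ℂ f₁ := by
    apply Differentiable.sub
    · exact (Complex.differentiable_cos.comp (differentiable_id.div_const 2)).const_mul 2
    · exact differentiable_id.const_mul _
  have hdiff2 : Differentiable ℂ f₂ := by
    apply Differentiable.add
    · exact (Complex.differentiable_cos.comp (differentiable_id.div_const 2)).const_mul 2
    · exact differentiable_id.const_mul _
  have hca : ((a:ℂ))^2 = ((c:ℂ))^2 := by
    exact_mod_cast congrArg Complex.ofReal ha2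
  have hprod : ∀ z : ℂ, -(c : ℂ) ^ 2 * z ^ 2 + 2 + 2 * Complex.cos z = f₁ z * f₂ z := by
    intro z
    have hcs := Complex.cos_sq (z/2)
    rw [show (2:ℂ)*(z/2) = z by ring] at hcs
    simp only [hf₁, hf₂]
    linear_combination (-4:ℂ) * hcs + z^2 * hca
  -- values at ±ω
  have hf1ω : f₁ (ω:ℂ) = 0 := by
    simp only [hf₁]
    have h7 := congrArg Complex.ofReal (congrArg (fun t : ℝ => t) hkey)
    push_cast at h7
    linear_combination h7
  have hf2ω : f₂ (-(ω:ℂ)) = 0 := by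
    simp only [hf₂]
    rw [show -(ω:ℂ)/2 = -((ω:ℂ)/2) by ring, Complex.cos_neg]
    have h7 := congrArg Complex.ofReal (congrArg (fun t : ℝ => t) hkey)
    push_cast at h7
    linear_combination h7
  -- zero classification
  have hz1 : ∀ z : ℂ, |z.im| < 3 → f₁ z = 0 → z = (ω:ℂ) := by
    intro z hz h0
    apply f1_zero_classify ha hkey hz
    simp only [hf₁] at h0
    linear_combination h0
  have hz2 : ∀ z : ℂ, |z.im| < 3 → f₂ z = 0 → z = -(ω:ℂ) := by
    intro z hz h0
    have h1 : 2 * Complex.cos ((-z)/2) = (a:ℂ) * (-z) := by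
      rw [show (-z)/2 = -(z/2) by ring, Complex.cos_neg]
      simp only [hf₂] at h0
      linear_combination h0
    have h2 : |(-z).im| < 3 := by simpa using hz
    have := f1_zero_classify ha hkey h2 h1
    exact neg_eq_iff_eq_neg.mp this
  -- derivatives at the zeros
  have hd1 : HasDerivAt f₁ (-Complex.sin ((ω:ℂ)/2) * (2 * (1/2)) - (a:ℂ)) (ω:ℂ) := by
    simp only [hf₁]
    apply HasDerivAt.sub
    · have h1 : HasDerivAt (fun z : ℂ => Complex.cos (z/2)) (-Complex.sin ((ω:ℂ)/2) * (1/2)) (ω:ℂ) :=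
        by have := (Complex.hasDerivAt_cos ((ω:ℂ)/2)).comp (ω:ℂ) ((hasDerivAt_id (ω:ℂ)).div_const 2); exact this
      have := h1.const_mul (2:ℂ)
      exact this.congr_deriv (by ring)
    · simpa using (hasDerivAt_id ((ω:ℂ))).const_mul (a:ℂ)
  have hd2 : HasDerivAt f₂ (-Complex.sin (-(ω:ℂ)/2) * (2 * (1/2)) + (a:ℂ)) (-(ω:ℂ)) := by
    simp only [hf₂]
    apply HasDerivAt.add
    · have h1 : HasDerivAt (fun z : ℂ => Complex.cos (z/2)) (-Complex.sin (-(ω:ℂ)/2) * (1/2)) (-(ω:ℂ)) :=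
        by have := (Complex.hasDerivAt_cos (-(ω:ℂ)/2)).comp (-(ω:ℂ)) ((hasDerivAt_id (-(ω:ℂ))).div_const 2); exact this
      have := h1.const_mul (2:ℂ)
      exact this.congr_deriv (by ring)
    · simpa using (hasDerivAt_id (-(ω:ℂ))).const_mul (a:ℂ)
  have hD1ne : deriv f₁ (ω:ℂ) ≠ 0 := by
    rw [hd1.deriv]
    have hcast : -Complex.sin ((ω:ℂ)/2) * (2 * (1/2)) - (a:ℂ)
        = ((-Real.sin (ω/2) - a : ℝ) : ℂ) := by
      push_cast
      ring
    rw [hcast, Complex.ofReal_ne_zero]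
    have := Real.neg_one_le_sin (ω/2)
    intro h
    nlinarith [Real.sin_le_one (ω/2)]
  have hD2ne : deriv f₂ (-(ω:ℂ)) ≠ 0 := by
    rw [hd2.deriv]
    have hcast : -Complex.sin (-(ω:ℂ)/2) * (2 * (1/2)) + (a:ℂ)
        = ((Real.sin (ω/2) + a : ℝ) : ℂ) := by
      rw [show -(ω:ℂ)/2 = -((ω:ℂ)/2) by ring, Complex.sin_neg]
      push_cast
      ring
    rw [hcast, Complex.ofReal_ne_zero]
    intro h
    nlinarith [Real.neg_one_le_sin (ω/2)]
  -- the strip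
  set S : Set ℂ := {z : ℂ | |z.im| < 3} with hS
  have hSopen : IsOpen S := by
    have : S = Complex.im ⁻¹' (Set.Ioo (-3) 3) := by
      ext w; simp [hS, abs_lt, Set.mem_preimage]
    rw [this]
    exact isOpen_Ioo.preimage Complex.continuous_im
  have hωS : (ω:ℂ) ∈ S := by simp [hS]
  have hωS' : -(ω:ℂ) ∈ S := by simp [hS]
  have hn1 : S ∈ nhds (ω:ℂ) := hSopen.mem_nhds hωS
  have hn2 : S ∈ nhds (-(ω:ℂ)) := hSopen.mem_nhds hωS'
  -- the function g
  refine ⟨fun z => dslope f₁ (ω:ℂ) z * dslope f₂ (-(ω:ℂ)) z, ?_, ?_⟩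
  · exact ((Complex.differentiableOn_dslope hn1).2 hdiff1.differentiableOn).mul
      ((Complex.differentiableOn_dslope hn2).2 hdiff2.differentiableOn)
  · intro z hzS
    have hzS' : |z.im| < 3 := hzS
    constructor
    · apply mul_ne_zero
      · by_cases hzω : z = (ω:ℂ)
        · rw [hzω, dslope_same]
          exact hD1ne
        · rw [dslope_of_ne f₁ hzω, slope_def_field]
          apply div_ne_zero
          · rw [hf1ω, sub_zero]
            intro h0
            exact hzω (hz1 z hzS' h0)
          · exact sub_ne_zero.2 hzω
      · by_cases hzω : z = -(ω:ℂ)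
        · rw [hzω, dslope_same]
          exact hD2ne
        · rw [dslope_of_ne f₂ hzω, slope_def_field]
          apply div_ne_zero
          · rw [hf2ω, sub_zero]
            intro h0
            exact hzω (hz2 z hzS' h0)
          · exact sub_ne_zero.2 hzω
    · have e1 : (z - (ω:ℂ)) * dslope f₁ (ω:ℂ) z = f₁ z := by
        have := sub_smul_dslope f₁ (ω:ℂ) z
        rw [smul_eq_mul, hf1ω, sub_zero] at this
        exact this
      have e2 : (z + (ω:ℂ)) * dslope f₂ (-(ω:ℂ)) z = f₂ z := by
        have := sub_smul_dslope f₂ (-(ω:ℂ)) z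
        rw [smul_eq_mul, hf2ω, sub_zero, sub_neg_eq_add] at this
        exact this
      calc -(c : ℂ) ^ 2 * z ^ 2 + 2 + 2 * Complex.cos z = f₁ z * f₂ z := hprod z
        _ = ((z - (ω:ℂ)) * dslope f₁ (ω:ℂ) z) * ((z + (ω:ℂ)) * dslope f₂ (-(ω:ℂ)) z) := by
            rw [e1, e2]
        _ = (z - (ω:ℂ)) * (z + (ω:ℂ)) * (dslope f₁ (ω:ℂ) z * dslope f₂ (-(ω:ℂ)) z) := by
            ring
end

section
/- Let μ be a real number with |μ| ≤ 1/2 and let K ∈ (0, π/2). Then λ_μ^+(K) − (2+μ)(1 − cos K) = √(μ² + 4(1+μ)cos²(K)) + (2+μ)cos(K) ≥ √2·cos(K) > 0; and, setting υ := μ sin(K) / (λ_μ^+(K) − (2+μ)(1−cos K)), the vector (iυ, 1) ∈ ℂ² is an eigenvector of the matrix D̃_μ[K] with eigenvalue λ_μ^+(K). Moreover |υ| ≤ |μ|/(√2 cos K). -/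
/-- For `|μ| ≤ 1/2` and `K ∈ (0, π/2)`:
`λ_μ⁺(K) - (2+μ)(1 - cos K) = √(μ² + 4(1+μ)cos²K) + (2+μ)cos K ≥ √2 cos K > 0`;
the vector `(iυ, 1)` with `υ = μ sin K / (λ_μ⁺(K) - (2+μ)(1-cos K))` is an
eigenvector of `D̃_μ[K]` with eigenvalue `λ_μ⁺(K)`; and `|υ| ≤ |μ|/(√2 cos K)`. -/
theorem symbol_matrix_eigenvector (μ K : ℝ) (hμ : |μ| ≤ 1 / 2)
    (hK0 : 0 < K) (hKpi : K < Real.pi / 2) :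
    let lam : ℝ := 2 + μ + Real.sqrt (μ ^ 2 + 4 * (1 + μ) * Real.cos K ^ 2)
    let υ : ℝ := μ * Real.sin K / (lam - (2 + μ) * (1 - Real.cos K))
    let D : Matrix (Fin 2) (Fin 2) ℂ :=
      !![(((2 + μ) * (1 - Real.cos K) : ℝ) : ℂ),
         Complex.I * (μ : ℂ) * (Real.sin K : ℂ);
         -(Complex.I * (μ : ℂ) * (Real.sin K : ℂ)),
         (((2 + μ) * (1 + Real.cos K) : ℝ) : ℂ)]
    (lam - (2 + μ) * (1 - Real.cos K)
        = Real.sqrt (μ ^ 2 + 4 * (1 + μ) * Real.cos K ^ 2) + (2 + μ) * Real.cos K) ∧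
    Real.sqrt 2 * Real.cos K ≤ lam - (2 + μ) * (1 - Real.cos K) ∧
    0 < Real.sqrt 2 * Real.cos K ∧
    D.mulVec ![Complex.I * (υ : ℂ), 1] = (lam : ℂ) • ![Complex.I * (υ : ℂ), 1] ∧
    |υ| ≤ |μ| / (Real.sqrt 2 * Real.cos K) := by
  intro lam υ D
  have hlamdef : lam = 2 + μ + Real.sqrt (μ ^ 2 + 4 * (1 + μ) * Real.cos K ^ 2) := rfl
  have hυdef : υ = μ * Real.sin K / (lam - (2 + μ) * (1 - Real.cos K)) := rfl
  clear_value lam υ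
  obtain ⟨hμ1, hμ2⟩ := abs_le.mp hμ
  have hc : 0 < Real.cos K :=
    Real.cos_pos_of_mem_Ioo ⟨by linarith [Real.pi_pos], hKpi⟩
  set s := Real.sqrt (μ ^ 2 + 4 * (1 + μ) * Real.cos K ^ 2) with hsdef
  have harg : (0:ℝ) ≤ μ ^ 2 + 4 * (1 + μ) * Real.cos K ^ 2 := by
    nlinarith [sq_nonneg μ, sq_nonneg (Real.cos K)]
  have hs2 : s ^ 2 = μ ^ 2 + 4 * (1 + μ) * Real.cos K ^ 2 := Real.sq_sqrt harg
  have h2 : Real.sqrt 2 * Real.cos K = Real.sqrt (2 * Real.cos K ^ 2) := by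
    rw [Real.sqrt_mul (by norm_num), Real.sqrt_sq hc.le]
  have hsge : Real.sqrt 2 * Real.cos K ≤ s := by
    rw [h2, hsdef]
    apply Real.sqrt_le_sqrt
    nlinarith [sq_nonneg μ, sq_nonneg (Real.cos K)]
  clear hsdef
  have heq : lam - (2 + μ) * (1 - Real.cos K) = s + (2 + μ) * Real.cos K := by
    rw [hlamdef]; ring
  have hd : Real.sqrt 2 * Real.cos K ≤ lam - (2 + μ) * (1 - Real.cos K) := by
    rw [heq]; nlinarith
  have hpos : 0 < Real.sqrt 2 * Real.cos K :=
    mul_pos (Real.sqrt_pos.mpr two_pos) hc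
  have hdpos : 0 < lam - (2 + μ) * (1 - Real.cos K) := lt_of_lt_of_le hpos hd
  have hdne : lam - (2 + μ) * (1 - Real.cos K) ≠ 0 := ne_of_gt hdpos
  have hυ : υ * (lam - (2 + μ) * (1 - Real.cos K)) = μ * Real.sin K := by
    rw [hυdef]; exact div_mul_cancel₀ _ hdne
  have hsin : Real.sin K ^ 2 = 1 - Real.cos K ^ 2 := by
    nlinarith [Real.sin_sq_add_cos_sq K]
  have key : (lam - (2 + μ) * (1 - Real.cos K)) * (lam - (2 + μ) * (1 + Real.cos K))
      = (μ * Real.sin K) ^ 2 := by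
    have h1 : lam - (2 + μ) * (1 + Real.cos K) = s - (2 + μ) * Real.cos K := by
      rw [hlamdef]; ring
    rw [heq, h1]
    linear_combination hs2 - μ ^ 2 * hsin
  have hυ2 : υ * (μ * Real.sin K) = lam - (2 + μ) * (1 + Real.cos K) := by
    rw [hυdef, div_mul_eq_mul_div, div_eq_iff hdne]
    linear_combination -key
  have r1 : (2 + μ) * (1 - Real.cos K) * υ + μ * Real.sin K = lam * υ := by
    linear_combination -hυ
  have r2 : μ * Real.sin K * υ + (2 + μ) * (1 + Real.cos K) = lam := by
    linear_combination hυ2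
  refine ⟨heq, hd, hpos, ?_, ?_⟩
  · have c1 : ((2 + μ) * (1 - Real.cos K) * υ + μ * Real.sin K : ℂ) = lam * υ := by
      exact_mod_cast r1
    have c2 : (μ * Real.sin K * υ + (2 + μ) * (1 + Real.cos K) : ℂ) = lam := by
      exact_mod_cast r2
    funext i
    fin_cases i <;>
      simp [D, Matrix.mulVec, dotProduct, Fin.sum_univ_two] <;>
      push_cast at c1 c2 ⊢
    · linear_combination Complex.I * c1
    · linear_combination c2 - (μ * Complex.sin K * υ : ℂ) * Complex.I_sq
  · have habs : |υ| = |μ * Real.sin K| / (lam - (2 + μ) * (1 - Real.cos K)) := by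
      rw [hυdef, abs_div, abs_of_pos hdpos]
    rw [habs]
    have hsin1 : |Real.sin K| ≤ 1 := abs_le.mpr ⟨Real.neg_one_le_sin K, Real.sin_le_one K⟩
    have hnum : |μ * Real.sin K| ≤ |μ| := by
      rw [abs_mul]; nlinarith [abs_nonneg μ]
    exact div_le_div₀ (abs_nonneg μ) hnum hpos hd
end

section
/- Let μ be a real number with 0 < |μ| < 1. Then the functions λ_μ^± are differentiable on ℝ, with |(λ_μ^±)′(K)| = 4(1+μ)|sin(K)cos(K)| / √(μ² + 4(1+μ)cos²(K)) for all K. Moreover, if −1 < μ < 0 then |(λ_μ^±)′(K)| ≤ 2|sin(K)| ≤ 2|K| for all K, while if 0 < μ < 1 then |(λ_μ^±)′(K)| ≤ 2(1+μ)|K| for all K. -/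
/-- For `0 < |μ| < 1` the eigenvalue curves
`λ_μ^±(K) = 2 + μ ± √(μ² + 4(1+μ)cos²K)` are differentiable, with
`|(λ_μ^±)′(K)| = 4(1+μ)|sin K cos K| / √(μ² + 4(1+μ)cos²K)`; moreover
`|(λ_μ^±)′(K)| ≤ 2|sin K| ≤ 2|K|` when `μ < 0`, and
`|(λ_μ^±)′(K)| ≤ 2(1+μ)|K|` when `μ > 0`. -/
theorem eigenvalue_curve_derivative_bounds (μ : ℝ) (hμ0 : 0 < |μ|) (hμ1 : |μ| < 1) :
    let lp : ℝ → ℝ := fun K => 2 + μ + Real.sqrt (μ ^ 2 + 4 * (1 + μ) * Real.cos K ^ 2)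
    let lm : ℝ → ℝ := fun K => 2 + μ - Real.sqrt (μ ^ 2 + 4 * (1 + μ) * Real.cos K ^ 2)
    (∀ K : ℝ, DifferentiableAt ℝ lp K ∧ DifferentiableAt ℝ lm K) ∧
    (∀ K : ℝ,
      |deriv lp K| = 4 * (1 + μ) * |Real.sin K * Real.cos K| /
        Real.sqrt (μ ^ 2 + 4 * (1 + μ) * Real.cos K ^ 2) ∧
      |deriv lm K| = 4 * (1 + μ) * |Real.sin K * Real.cos K| /
        Real.sqrt (μ ^ 2 + 4 * (1 + μ) * Real.cos K ^ 2)) ∧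
    (μ < 0 → ∀ K : ℝ,
      (|deriv lp K| ≤ 2 * |Real.sin K| ∧ |deriv lm K| ≤ 2 * |Real.sin K|) ∧
      2 * |Real.sin K| ≤ 2 * |K|) ∧
    (0 < μ → ∀ K : ℝ,
      |deriv lp K| ≤ 2 * (1 + μ) * |K| ∧ |deriv lm K| ≤ 2 * (1 + μ) * |K|) := by
  intro lp lm
  obtain ⟨hμl, hμr⟩ := abs_lt.mp hμ1
  have h1μ : 0 < 1 + μ := by linarith
  have hμne : μ ≠ 0 := by
    intro h; rw [h, abs_zero] at hμ0; exact lt_irrefl 0 hμ0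
  set f : ℝ → ℝ := fun K => μ ^ 2 + 4 * (1 + μ) * Real.cos K ^ 2 with hfdef
  have hfpos : ∀ K, 0 < f K := by
    intro K
    have h1 : 0 < μ ^ 2 := by positivity
    have h2 : 0 ≤ 4 * (1 + μ) * Real.cos K ^ 2 := by positivity
    simp only [hfdef]; linarith
  have hrpos : ∀ K, 0 < Real.sqrt (f K) := fun K => Real.sqrt_pos.mpr (hfpos K)
  have hder : ∀ K, HasDerivAt (fun K => Real.sqrt (f K))
      (-(4 * (1 + μ) * (Real.sin K * Real.cos K)) / Real.sqrt (f K)) K := by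
    intro K
    have hc2 : HasDerivAt (fun K => Real.cos K ^ 2)
        (2 * Real.cos K ^ 1 * (-Real.sin K)) K := (Real.hasDerivAt_cos K).pow 2
    have hg : HasDerivAt f (4 * (1 + μ) * (2 * Real.cos K ^ 1 * (-Real.sin K))) K :=
      ((hc2.const_mul (4 * (1 + μ))).const_add (μ ^ 2))
    have := hg.sqrt (ne_of_gt (hfpos K))
    convert this using 1
    have hr := (hrpos K).ne'
    field_simp
  have hderp : ∀ K, HasDerivAt lp
      (-(4 * (1 + μ) * (Real.sin K * Real.cos K)) / Real.sqrt (f K)) K := by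
    intro K; exact (hder K).const_add (2 + μ)
  have hderm : ∀ K, HasDerivAt lm
      (-(-(4 * (1 + μ) * (Real.sin K * Real.cos K)) / Real.sqrt (f K))) K := by
    intro K; exact (hder K).const_sub (2 + μ)
  have habs : ∀ K, |deriv lp K| = 4 * (1 + μ) * |Real.sin K * Real.cos K| / Real.sqrt (f K)
      ∧ |deriv lm K| = 4 * (1 + μ) * |Real.sin K * Real.cos K| / Real.sqrt (f K) := by
    intro K
    rw [(hderp K).deriv, (hderm K).deriv, abs_neg, abs_div, abs_neg,
      abs_of_pos (hrpos K), abs_mul, abs_of_pos (by linarith : (0:ℝ) < 4 * (1 + μ))]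
    exact ⟨rfl, rfl⟩
  have key : ∀ (c : ℝ) K, 0 < c → c ^ 2 * Real.cos K ^ 2 ≤ f K →
      4 * (1 + μ) * |Real.sin K * Real.cos K| / Real.sqrt (f K)
        ≤ 4 * (1 + μ) / c * |Real.sin K| := by
    intro c K hc hle
    have hr := hrpos K
    have hcr : c * |Real.cos K| ≤ Real.sqrt (f K) := by
      rw [Real.le_sqrt (by positivity) (hfpos K).le]
      calc (c * |Real.cos K|) ^ 2 = c ^ 2 * Real.cos K ^ 2 := by
            rw [mul_pow, sq_abs]
        _ ≤ f K := hle
    rw [div_le_iff₀ hr, abs_mul]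
    have h1 : 4 * (1 + μ) / c * |Real.sin K| * Real.sqrt (f K)
        ≥ 4 * (1 + μ) / c * |Real.sin K| * (c * |Real.cos K|) := by
      have : 0 ≤ 4 * (1 + μ) / c * |Real.sin K| := by positivity
      exact mul_le_mul_of_nonneg_left hcr this
    have h2 : 4 * (1 + μ) / c * |Real.sin K| * (c * |Real.cos K|)
        = 4 * (1 + μ) * (|Real.sin K| * |Real.cos K|) := by
      field_simp
    linarith
  refine ⟨fun K => ⟨(hderp K).differentiableAt, (hderm K).differentiableAt⟩, habs, ?_, ?_⟩
  · intro hμneg K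
    have hle : (2 * (1 + μ)) ^ 2 * Real.cos K ^ 2 ≤ f K := by
      have hc2 := sq_nonneg (Real.cos K)
      have hμ2 := sq_nonneg μ
      simp only [hfdef]
      nlinarith [mul_nonneg (mul_nonneg (by linarith : (0:ℝ) ≤ 4 * (1 + μ))
        (neg_nonneg.mpr hμneg.le)) hc2]
    have hk := key (2 * (1 + μ)) K (by linarith) hle
    have heq : 4 * (1 + μ) / (2 * (1 + μ)) = 2 := by
      field_simp; ring
    rw [heq] at hk
    obtain ⟨h1, h2⟩ := habs K
    rw [h1, h2]
    refine ⟨⟨hk, hk⟩, ?_⟩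
    have := Real.abs_sin_le_abs (x := K)
    linarith
  · intro hμpos K
    have hle : (2 : ℝ) ^ 2 * Real.cos K ^ 2 ≤ f K := by
      have hc2 := sq_nonneg (Real.cos K)
      have hμ2 := sq_nonneg μ
      simp only [hfdef]
      nlinarith [mul_nonneg hμpos.le hc2]
    have hk := key 2 K (by norm_num) hle
    have hsin := Real.abs_sin_le_abs (x := K)
    obtain ⟨h1, h2⟩ := habs K
    rw [h1, h2]
    have hfin : 4 * (1 + μ) / 2 * |Real.sin K| ≤ 2 * (1 + μ) * |K| := by
      have : 4 * (1 + μ) / 2 = 2 * (1 + μ) := by ring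
      rw [this]
      exact mul_le_mul_of_nonneg_left hsin (by linarith)
    exact ⟨le_trans hk hfin, le_trans hk hfin⟩
end

section
/- Let c be a real number with |c| > 1 and let μ ∈ (−1, 1) satisfy |μ| ≤ (c² − 1)/4. Then both functions K ↦ c²K² − λ_μ^+(K) and K ↦ c²K² − λ_μ^−(K) are strictly increasing on (0, ∞). -/
lemma sqrt_sub_sqrt_le (r u v : ℝ) :
    Real.sqrt (r ^ 2 + u ^ 2) - Real.sqrt (r ^ 2 + v ^ 2) ≤ |u - v| := by
  have hv : 0 ≤ r ^ 2 + v ^ 2 := by positivity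
  have hB := Real.sq_sqrt hv
  have hB0 := Real.sqrt_nonneg (r ^ 2 + v ^ 2)
  have hBv : |v| ≤ Real.sqrt (r ^ 2 + v ^ 2) := by
    rw [show r ^ 2 + v ^ 2 = v ^ 2 + r ^ 2 by ring]
    simpa using Real.sqrt_le_sqrt (by nlinarith [sq_abs v, sq_nonneg r] :
      |v| ^ 2 ≤ v ^ 2 + r ^ 2) |>.trans_eq' (Real.sqrt_sq (abs_nonneg v))
  have hle : r ^ 2 + u ^ 2 ≤ (Real.sqrt (r ^ 2 + v ^ 2) + |u - v|) ^ 2 := by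
    nlinarith [le_abs_self (v * (u - v)), abs_mul v (u - v), sq_abs (u - v),
      mul_le_mul_of_nonneg_right hBv (abs_nonneg (u - v))]
  have := Real.sqrt_le_sqrt hle
  rwa [Real.sqrt_sq (by positivity), ← sub_le_iff_le_add'] at this

lemma cos_dist (x y : ℝ) (hx : 0 ≤ x) (hxy : x ≤ y) :
    |Real.cos y - Real.cos x| ≤ (y ^ 2 - x ^ 2) / 2 := by
  rw [Real.cos_sub_cos]
  have h1 : |Real.sin ((y + x) / 2)| ≤ (y + x) / 2 := by
    simpa [abs_of_nonneg (by linarith : (0:ℝ) ≤ (y + x) / 2)] using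
      Real.abs_sin_le_abs (x := (y + x) / 2)
  have h2 : |Real.sin ((y - x) / 2)| ≤ (y - x) / 2 := by
    simpa [abs_of_nonneg (by linarith : (0:ℝ) ≤ (y - x) / 2)] using
      Real.abs_sin_le_abs (x := (y - x) / 2)
  have h3 : |(-2 : ℝ) * Real.sin ((y + x) / 2) * Real.sin ((y - x) / 2)| =
      2 * (|Real.sin ((y + x) / 2)| * |Real.sin ((y - x) / 2)|) := by
    rw [abs_mul, abs_mul]; norm_num; ring
  rw [h3]
  nlinarith [abs_nonneg (Real.sin ((y + x) / 2)), abs_nonneg (Real.sin ((y - x) / 2))]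

/-- For `|c| > 1` and `μ ∈ (-1,1)` with `|μ| ≤ (c² - 1)/4`, the functions
`K ↦ c²K² - λ_μ^±(K)` are strictly increasing on `(0, ∞)`. -/
theorem dispersion_functions_strictMono (c μ : ℝ) (hc : 1 < |c|)
    (hμl : -1 < μ) (hμu : μ < 1) (hμc : |μ| ≤ (c ^ 2 - 1) / 4) :
    StrictMonoOn (fun K : ℝ =>
      c ^ 2 * K ^ 2 - (2 + μ + Real.sqrt (μ ^ 2 + 4 * (1 + μ) * Real.cos K ^ 2)))
      (Set.Ioi 0) ∧
    StrictMonoOn (fun K : ℝ =>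
      c ^ 2 * K ^ 2 - (2 + μ - Real.sqrt (μ ^ 2 + 4 * (1 + μ) * Real.cos K ^ 2)))
      (Set.Ioi 0) := by
  have hc2 : 1 < c ^ 2 := by nlinarith [abs_nonneg c, sq_abs c]
  set s := Real.sqrt (1 + μ) with hs
  have hs2 : s ^ 2 = 1 + μ := Real.sq_sqrt (by linarith)
  have hs0 : 0 ≤ s := Real.sqrt_nonneg _
  have hμle : μ ≤ (c ^ 2 - 1) / 4 := (le_abs_self μ).trans hμc
  have hsc : s < c ^ 2 := by nlinarith
  have hrw : ∀ K : ℝ, μ ^ 2 + 4 * (1 + μ) * Real.cos K ^ 2 =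
      μ ^ 2 + (2 * s * Real.cos K) ^ 2 := by
    intro K; nlinarith [Real.cos_sq_le_one K, sq_nonneg (Real.cos K)]
  -- key estimate
  have key : ∀ x ∈ Set.Ioi (0:ℝ), ∀ y ∈ Set.Ioi (0:ℝ), x < y →
      |Real.sqrt (μ ^ 2 + 4 * (1 + μ) * Real.cos y ^ 2) -
        Real.sqrt (μ ^ 2 + 4 * (1 + μ) * Real.cos x ^ 2)| < c ^ 2 * (y ^ 2 - x ^ 2) := by
    intro x hx y _hy hxy
    rw [hrw x, hrw y]
    have h1 := sqrt_sub_sqrt_le μ (2 * s * Real.cos y) (2 * s * Real.cos x)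
    have h2 := sqrt_sub_sqrt_le μ (2 * s * Real.cos x) (2 * s * Real.cos y)
    have habs : |2 * s * Real.cos y - 2 * s * Real.cos x| =
        2 * s * |Real.cos y - Real.cos x| := by
      rw [show 2 * s * Real.cos y - 2 * s * Real.cos x
          = (2 * s) * (Real.cos y - Real.cos x) by ring, abs_mul,
        abs_of_nonneg (by linarith)]
    have hcd := cos_dist x y (le_of_lt hx) (le_of_lt hxy)
    have hx0 : (0:ℝ) < x := hx
    have hyx : 0 < y ^ 2 - x ^ 2 := by nlinarith
    rw [abs_lt]
    constructor
    · have := h2.trans_eq ((abs_sub_comm _ _).trans habs)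
      nlinarith
    · have := h1.trans_eq habs
      nlinarith
  constructor
  · intro x hx y hy hxy
    have h := key x hx y hy hxy
    rw [abs_lt] at h
    simp only
    nlinarith [h.1, h.2]
  · intro x hx y hy hxy
    have h := key x hx y hy hxy
    rw [abs_lt] at h
    simp only
    nlinarith [h.1, h.2]
end

section
/- Let c be a real number with |c| > 1 and let μ ∈ (−1, 1) satisfy |μ| ≤ (c² − 1)/4. Then for a real number K, the equality c²K² = λ_μ^−(K) holds if and only if K = 0. -/
set_option maxHeartbeats 800000


/-- For `|c| > 1` and `μ ∈ (-1,1)` with `|μ| ≤ (c² - 1)/4`, the equation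
`c²K² = λ_μ⁻(K)` holds if and only if `K = 0`. -/
theorem acoustic_branch_only_zero (c μ : ℝ) (hc : 1 < |c|)
    (hμl : -1 < μ) (hμu : μ < 1) (hμc : |μ| ≤ (c ^ 2 - 1) / 4) :
    ∀ K : ℝ,
      c ^ 2 * K ^ 2 = 2 + μ - Real.sqrt (μ ^ 2 + 4 * (1 + μ) * Real.cos K ^ 2) ↔
      K = 0 := by
  have hc2 : 1 < c ^ 2 := by nlinarith [sq_abs c, abs_nonneg c]
  have hμ1 : 0 < 1 + μ := by linarith
  have hμa := abs_le.mp hμc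
  intro K
  constructor
  · intro h
    by_contra hK
    have hK2 : 0 < K ^ 2 := by positivity
    set E := μ ^ 2 + 4 * (1 + μ) * Real.cos K ^ 2 with hEdef
    have hE : 0 ≤ E := by positivity
    have hsnn : 0 ≤ Real.sqrt E := Real.sqrt_nonneg E
    have hlt : 2 + μ - Real.sqrt E < c ^ 2 * K ^ 2 := by
      rcases lt_or_ge (2 + μ) (c ^ 2 * K ^ 2) with h1 | h1
      · linarith
      · -- squaring case
        have hK2lt : K ^ 2 < 2 := by nlinarith
        have hcosb : 1 - K ^ 2 / 2 ≤ Real.cos K := Real.one_sub_sq_div_two_le_cos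
        have hcospos : (0:ℝ) ≤ 1 - K ^ 2 / 2 := by linarith
        have hcossq : (1 - K ^ 2 / 2) ^ 2 ≤ Real.cos K ^ 2 :=
          pow_le_pow_left₀ hcospos hcosb 2
        have hA : 0 < 4 * (c ^ 2 - 1) + 2 * μ * (c ^ 2 - 2) := by
          rcases le_or_gt 2 (c ^ 2) with h2 | h2
          · nlinarith [mul_nonneg (by linarith : (0:ℝ) ≤ μ + 1) (by linarith : (0:ℝ) ≤ c ^ 2 - 2)]
          · nlinarith [mul_nonneg (by linarith : (0:ℝ) ≤ (c ^ 2 - 1) / 4 - μ)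
              (by linarith : (0:ℝ) ≤ 2 - c ^ 2),
              mul_nonneg (by linarith : (0:ℝ) ≤ μ + (c ^ 2 - 1) / 4)
              (by linarith : (0:ℝ) ≤ 2 - c ^ 2)]
        have hQ : 0 < (2 + μ) * c ^ 4 - 4 * (1 + μ) * c ^ 2 + (1 + μ) * (2 + μ) := by
          rcases eq_or_ne μ 0 with h0 | h0
          · subst h0; nlinarith [sq_nonneg (c ^ 2 - 1)]
          · have hμsq : 0 < μ ^ 2 := by positivity
            nlinarith [sq_nonneg ((2 + μ) * c ^ 2 - 2 * (1 + μ)), mul_pos hμ1 hμsq]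
        have hinner : 0 < 4 * (c ^ 2 - 1) + 2 * μ * (c ^ 2 - 2) + K ^ 2 * ((1 + μ) - c ^ 4) := by
          rcases le_or_gt (c ^ 4) (1 + μ) with h4 | h4
          · nlinarith
          · have hp : 0 ≤ (c ^ 4 - (1 + μ)) * (2 + μ - c ^ 2 * K ^ 2) :=
              mul_nonneg (by linarith) (by linarith)
            have hc2pos : (0:ℝ) < c ^ 2 := by linarith
            have key : 0 < c ^ 2 *
                (4 * (c ^ 2 - 1) + 2 * μ * (c ^ 2 - 2) + K ^ 2 * ((1 + μ) - c ^ 4)) := by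
              nlinarith [hQ, hp]
            by_contra hn
            push_neg at hn
            have : c ^ 2 *
                (4 * (c ^ 2 - 1) + 2 * μ * (c ^ 2 - 2) + K ^ 2 * ((1 + μ) - c ^ 4)) ≤ 0 :=
              mul_nonpos_of_nonneg_of_nonpos hc2pos.le hn
            linarith
        have hEgt : (2 + μ - c ^ 2 * K ^ 2) ^ 2 < E := by
          rw [hEdef]
          nlinarith [mul_pos hK2 hinner,
            mul_nonneg (by linarith : (0:ℝ) ≤ 4 * (1 + μ))
              (by linarith : (0:ℝ) ≤ Real.cos K ^ 2 - (1 - K ^ 2 / 2) ^ 2)]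
        have hsq : 2 + μ - c ^ 2 * K ^ 2 < Real.sqrt E := by
          calc 2 + μ - c ^ 2 * K ^ 2 = Real.sqrt ((2 + μ - c ^ 2 * K ^ 2) ^ 2) :=
                (Real.sqrt_sq (by linarith)).symm
            _ < Real.sqrt E := Real.sqrt_lt_sqrt (sq_nonneg _) hEgt
        linarith
    linarith
  · intro h
    subst h
    have h1 : μ ^ 2 + 4 * (1 + μ) * Real.cos 0 ^ 2 = (μ + 2) ^ 2 := by
      rw [Real.cos_zero]; ring
    rw [h1, Real.sqrt_sq (by linarith)]
    ring
end

section
/- For every real number c with |c| > 1 there exists a constant C(c) > 0 such that for every μ ∈ (−1, 1) with |μ| ≤ (c² − 1)/4, one has |ω_c^μ − ω_c| ≤ C(c)·|μ|, where ω_c^μ is the unique positive solution of c²ω² = λ_μ^+(ω) and ω_c is the unique positive zero of B̃_c(k) = −c²k² + 2 + 2cos(k). -/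
set_option maxHeartbeats 1000000

private lemma cfp_sqrt2_ub (s2 : ℝ) (hs : s2 ^ 2 = 2) (hn : 0 ≤ s2) : s2 ≤ 1.5 := by
  nlinarith

private lemma cfp_sqrt2_lb (s2 : ℝ) (hs : s2 ^ 2 = 2) (hn : 0 ≤ s2) : 1.4 ≤ s2 := by
  nlinarith

/-- From `b ≥ 1`, `w > 0`, `b w² ≥ 2` conclude `b w ≥ √2`. -/
private lemma cfp_lb (b w s2 : ℝ) (hb : 1 ≤ b) (hw : 0 < w) (h2 : 2 ≤ b * w ^ 2)
    (hs : s2 ^ 2 = 2) (hn : 0 ≤ s2) : s2 ≤ b * w := by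
  by_contra h
  push_neg at h
  have hbw : 0 < b * w := mul_pos (by linarith) hw
  nlinarith [mul_pos (sub_pos.2 h) (show (0:ℝ) < s2 + b * w by linarith),
    mul_nonneg (sub_nonneg.2 hb) (show (0:ℝ) ≤ b * w ^ 2 by linarith)]

/-- Quantitative bound `√(μ² + 4(1+μ)t²) ≤ 2t + 2|μ|` for `t ∈ [0,1]`, `μ ∈ (-1,1)`. -/
private lemma cfp_A (μ t a : ℝ) (hμ1 : -1 < μ) (ht0 : 0 ≤ t) (ht1 : t ≤ 1)
    (ha2 : a ^ 2 = μ ^ 2 + 4 * (1 + μ) * t ^ 2) (ha0 : 0 ≤ a) :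
    a ≤ 2 * t + 2 * |μ| := by
  have key : a ^ 2 ≤ (2 * t + 2 * |μ|) ^ 2 := by
    rw [ha2]
    nlinarith [sq_abs μ, le_abs_self μ, neg_abs_le μ, abs_nonneg μ,
      mul_nonneg (abs_nonneg μ) ht0,
      mul_nonneg (abs_nonneg μ) (mul_nonneg ht0 (sub_nonneg.2 ht1)),
      mul_nonneg (show (0:ℝ) ≤ |μ| + μ by linarith [neg_abs_le μ]) (sq_nonneg t)]
  have h := Real.sqrt_le_sqrt key
  rwa [Real.sqrt_sq ha0, Real.sqrt_sq (by positivity)] at h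

/-- Quantitative bound `2t - 2|μ| ≤ √(μ² + 4(1+μ)t²)` for `t ∈ [0,1]`, `μ ∈ (-1,1)`. -/
private lemma cfp_B (μ t a : ℝ) (hμ1 : -1 < μ) (ht0 : 0 ≤ t) (ht1 : t ≤ 1)
    (ha2 : a ^ 2 = μ ^ 2 + 4 * (1 + μ) * t ^ 2) (ha0 : 0 ≤ a) :
    2 * t - 2 * |μ| ≤ a := by
  rcases le_or_gt (2 * t - 2 * |μ|) 0 with h | h
  · linarith
  · have htm : |μ| ≤ t := by linarith
    have key : (2 * t - 2 * |μ|) ^ 2 ≤ a ^ 2 := by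
      rw [ha2]
      nlinarith [sq_abs μ, abs_nonneg μ,
        mul_nonneg (abs_nonneg μ) (sub_nonneg.2 htm),
        mul_nonneg (abs_nonneg μ) (mul_nonneg ht0 (sub_nonneg.2 ht1)),
        mul_nonneg (abs_nonneg μ) ht0,
        mul_nonneg (show (0:ℝ) ≤ |μ| + μ by linarith [neg_abs_le μ]) (sq_nonneg t)]
    have h2 := Real.sqrt_le_sqrt key
    rwa [Real.sqrt_sq h.le, Real.sqrt_sq ha0] at h2

/-- If `a ≤ |μ| + 2√2 x` with `x ≥ 0` and `b(x+π/2)² = 2+μ+a`, `b > 1`,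
`|μ| ≤ (b-1)/4`, then contradiction. -/
private lemma cfp_no_big (b μ x a s2 : ℝ) (hb : 1 < b) (hmc : |μ| ≤ (b - 1) / 4)
    (hx : 0 ≤ x) (hs : s2 ^ 2 = 2) (hn : 0 ≤ s2) (ha : a ≤ |μ| + 2 * s2 * x)
    (heq : b * (x + Real.pi / 2) ^ 2 = 2 + μ + a) : False := by
  have hπ : (3.141592 : ℝ) < Real.pi := Real.pi_gt_d6
  have hs15 : s2 ≤ 1.5 := cfp_sqrt2_ub s2 hs hn
  have hμm : μ ≤ |μ| := le_abs_self μ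
  have hπ2 : (9.86 : ℝ) < Real.pi ^ 2 := by nlinarith
  nlinarith [sq_nonneg x, mul_nonneg (sub_nonneg.2 hb.le) (sq_nonneg x),
    mul_nonneg hx (show (0:ℝ) ≤ Real.pi - 2 * s2 by linarith),
    mul_nonneg (mul_nonneg (sub_nonneg.2 hb.le) hx) (show (0:ℝ) ≤ Real.pi by linarith),
    mul_nonneg (sub_nonneg.2 hb.le) (show (0:ℝ) ≤ Real.pi ^ 2 - 9.86 by linarith)]

/-- Final step: from `s2 ≤ P`, `s2 ≤ Q`, `(P+Q) D ≤ 3m`, `D ≥ 0` get `D ≤ 2m`. -/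
private lemma cfp_concl (P Q D m s2 : ℝ) (hP : s2 ≤ P) (hQ : s2 ≤ Q) (hD : 0 ≤ D)
    (h : (P + Q) * D ≤ 3 * m) (hs : s2 ^ 2 = 2) (hn : 0 ≤ s2) (hm : 0 ≤ m) :
    D ≤ 2 * m := by
  have h14 : 1.4 ≤ s2 := cfp_sqrt2_lb s2 hs hn
  have h2 : 2 * s2 * D ≤ 3 * m := by
    nlinarith [mul_nonneg (show (0:ℝ) ≤ P + Q - 2 * s2 by linarith) hD]
  nlinarith [mul_nonneg (sub_nonneg.2 h14) hD]

/-- For each `|c| > 1` there is `C(c) > 0` such that for `μ ∈ (-1,1)` with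
`|μ| ≤ (c²-1)/4`, the critical frequency `ω_c^μ` (the unique positive solution
of `c²ω² = λ_μ⁺(ω)`) and the unique positive zero `ω_c` of
`B̃_c(k) = -c²k² + 2 + 2cos k` satisfy `|ω_c^μ - ω_c| ≤ C(c)|μ|`. -/
theorem critical_frequency_perturbation (c : ℝ) (hc : 1 < |c|) :
    ∃ C : ℝ, 0 < C ∧ ∀ μ ω ω₀ : ℝ, -1 < μ → μ < 1 → |μ| ≤ (c ^ 2 - 1) / 4 →
      0 < ω →
      c ^ 2 * ω ^ 2 = 2 + μ + Real.sqrt (μ ^ 2 + 4 * (1 + μ) * Real.cos ω ^ 2) →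
      0 < ω₀ → -c ^ 2 * ω₀ ^ 2 + 2 + 2 * Real.cos ω₀ = 0 →
      |ω - ω₀| ≤ C * |μ| := by
  refine ⟨2, by norm_num, ?_⟩
  intro μ ω ω₀ hμ1 hμ2 hμc hω hEq hω₀ hZ
  have hc2 : 1 < c ^ 2 := by nlinarith [sq_abs c, abs_nonneg c]
  have hπ : (3.141592 : ℝ) < Real.pi := Real.pi_gt_d6
  have hπ4 : Real.pi < 3.15 := by
    have := Real.pi_lt_d2; linarith
  set s2 := Real.sqrt 2 with hs2def
  have hs2sq : s2 ^ 2 = 2 := Real.sq_sqrt (by norm_num)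
  have hs2nn : 0 ≤ s2 := Real.sqrt_nonneg 2
  have hm0 : 0 ≤ |μ| := abs_nonneg μ
  have hmμ : μ ≤ |μ| := le_abs_self μ
  have hmμ' : -|μ| ≤ μ := neg_abs_le μ
  have h1μ : (0:ℝ) < 1 + μ := by linarith
  set t := Real.cos ω with htdef
  set a := Real.sqrt (μ ^ 2 + 4 * (1 + μ) * t ^ 2) with hadef
  have harg : (0:ℝ) ≤ μ ^ 2 + 4 * (1 + μ) * t ^ 2 := by positivity
  have ha2 : a ^ 2 = μ ^ 2 + 4 * (1 + μ) * t ^ 2 := Real.sq_sqrt harg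
  have ha0 : 0 ≤ a := Real.sqrt_nonneg _
  have ham : |μ| ≤ a := by
    have h := Real.sqrt_le_sqrt (show μ ^ 2 ≤ μ ^ 2 + 4 * (1 + μ) * t ^ 2 by
      nlinarith [mul_nonneg h1μ.le (sq_nonneg t)])
    rwa [Real.sqrt_sq_eq_abs] at h
  have ht1 : t ≤ 1 := Real.cos_le_one ω
  have ht1' : -1 ≤ t := Real.neg_one_le_cos ω
  -- ω₀ < π/2
  have hω₀π : ω₀ < Real.pi / 2 := by
    by_contra h
    push_neg at h
    have hω₀2 : ω₀ ≤ 2 := by nlinarith [Real.cos_le_one ω₀]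
    have hcn : Real.cos ω₀ ≤ 0 :=
      Real.cos_nonpos_of_pi_div_two_le_of_le h (by linarith)
    nlinarith
  have hcos₀ : 0 ≤ Real.cos ω₀ :=
    Real.cos_nonneg_of_neg_pi_div_two_le_of_le (by linarith) hω₀π.le
  -- ω < π/2
  have hωπ : ω < Real.pi / 2 := by
    by_contra h
    push_neg at h
    have hx0 : 0 ≤ ω - Real.pi / 2 := by linarith
    have hxπ : ω - Real.pi / 2 ≤ Real.pi := by
      have haub : a ≤ μ + 2 := by
        have h := Real.sqrt_le_sqrt (show μ ^ 2 + 4 * (1 + μ) * t ^ 2 ≤ (μ + 2) ^ 2 by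
          nlinarith [mul_nonneg h1μ.le
            (show (0:ℝ) ≤ 1 - t ^ 2 by nlinarith), sq_nonneg t])
        rwa [Real.sqrt_sq (by linarith)] at h
      nlinarith
    have hsx : t = -Real.sin (ω - Real.pi / 2) := by
      have h1 := Real.sin_pi_div_two_sub ω
      have h2 : Real.sin (-(ω - Real.pi / 2)) = t := by
        rw [show -(ω - Real.pi / 2) = Real.pi / 2 - ω by ring]; exact h1
      rw [Real.sin_neg] at h2; linarith
    have hsnn : 0 ≤ Real.sin (ω - Real.pi / 2) :=
      Real.sin_nonneg_of_nonneg_of_le_pi hx0 hxπ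
    have hsle : Real.sin (ω - Real.pi / 2) ≤ ω - Real.pi / 2 := Real.sin_le hx0
    have ht2 : t ^ 2 ≤ (ω - Real.pi / 2) ^ 2 := by rw [hsx]; nlinarith
    have hax : a ≤ |μ| + 2 * s2 * (ω - Real.pi / 2) := by
      have harg2 : μ ^ 2 + 4 * (1 + μ) * t ^ 2 ≤ (|μ| + 2 * s2 * (ω - Real.pi / 2)) ^ 2 := by
        nlinarith [sq_abs μ,
          mul_nonneg hm0 (mul_nonneg (mul_nonneg (by norm_num : (0:ℝ) ≤ 2) hs2nn) hx0)]
      have h := Real.sqrt_le_sqrt harg2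
      rwa [Real.sqrt_sq (by positivity)] at h
    exact cfp_no_big (c ^ 2) μ (ω - Real.pi / 2) a s2 hc2 hμc hx0 hs2sq hs2nn hax
      (by rw [show ω - Real.pi / 2 + Real.pi / 2 = ω by ring]; exact hEq)
  have hcost : 0 ≤ t := by
    rw [htdef]
    exact Real.cos_nonneg_of_neg_pi_div_two_le_of_le (by linarith) hωπ.le
  -- lower bounds
  have hωlb : 2 ≤ c ^ 2 * ω ^ 2 := by rw [hEq]; linarith
  have hω₀lb : 2 ≤ c ^ 2 * ω₀ ^ 2 := by nlinarith
  have hcω : s2 ≤ c ^ 2 * ω := cfp_lb (c ^ 2) ω s2 hc2.le hω hωlb hs2sq hs2nn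
  have hcω₀ : s2 ≤ c ^ 2 * ω₀ := cfp_lb (c ^ 2) ω₀ s2 hc2.le hω₀ hω₀lb hs2sq hs2nn
  -- key estimates
  have hA : a ≤ 2 * t + 2 * |μ| := cfp_A μ t a hμ1 hcost ht1 ha2 ha0
  have hB : 2 * t - 2 * |μ| ≤ a := cfp_B μ t a hμ1 hcost ht1 ha2 ha0
  have hg1 : c ^ 2 * ω ^ 2 - 2 - 2 * t ≤ 3 * |μ| := by rw [hEq]; linarith
  have hg2 : -(3 * |μ|) ≤ c ^ 2 * ω ^ 2 - 2 - 2 * t := by rw [hEq]; linarith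
  have hid : ∀ u v : ℝ, (c ^ 2 * u + c ^ 2 * v) * (u - v) = c ^ 2 * u ^ 2 - c ^ 2 * v ^ 2 := by
    intro u v; ring
  rcases le_total ω₀ ω with hle | hle
  · have hcc : t ≤ Real.cos ω₀ :=
      Real.cos_le_cos_of_nonneg_of_le_pi hω₀.le (by linarith) hle
    have key : (c ^ 2 * ω + c ^ 2 * ω₀) * (ω - ω₀) ≤ 3 * |μ| := by
      rw [hid]; linarith
    rw [abs_of_nonneg (by linarith : (0:ℝ) ≤ ω - ω₀)]
    exact cfp_concl (c ^ 2 * ω) (c ^ 2 * ω₀) (ω - ω₀) (|μ|) s2 hcω hcω₀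
      (by linarith) key hs2sq hs2nn hm0
  · have hcc : Real.cos ω₀ ≤ t :=
      Real.cos_le_cos_of_nonneg_of_le_pi hω.le (by linarith) hle
    have key : (c ^ 2 * ω₀ + c ^ 2 * ω) * (ω₀ - ω) ≤ 3 * |μ| := by
      rw [hid]; linarith
    rw [abs_of_nonpos (by linarith : ω - ω₀ ≤ (0:ℝ)), neg_sub]
    exact cfp_concl (c ^ 2 * ω₀) (c ^ 2 * ω) (ω₀ - ω) (|μ|) s2 hcω₀ hcω
      (by linarith) key hs2sq hs2nn hm0
end

section
/- For all real numbers ω, θ, and R: ∫_R^{R+1} sin(ω(x+θ))·sin(ω(x−1)) dx − ∫_{R−1}^{R} sin(ω(x+θ))·sin(ω(x+1)) dx = −sin(ωθ)·sin(ω). In particular, the left-hand side is independent of R. -/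
/-- Exact trigonometric integral identity underlying the solvability functional:
for all real `ω`, `θ`, `R`,
`∫_R^{R+1} sin(ω(x+θ)) sin(ω(x-1)) dx - ∫_{R-1}^R sin(ω(x+θ)) sin(ω(x+1)) dx
  = -sin(ωθ) sin ω`, independently of `R`. -/
theorem resonance_integral_identity (ω θ R : ℝ) :
    (∫ x in R..(R + 1), Real.sin (ω * (x + θ)) * Real.sin (ω * (x - 1))) -
    (∫ x in (R - 1)..R, Real.sin (ω * (x + θ)) * Real.sin (ω * (x + 1))) =
    -(Real.sin (ω * θ) * Real.sin ω) := by
  have h1 : ∀ x : ℝ, Real.sin (ω * (x + θ)) * Real.sin (ω * (x - 1)) =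
      (Real.cos (ω * (θ + 1)) - Real.cos (ω * (2 * x + θ - 1))) / 2 := by
    intro x
    have := Real.two_mul_sin_mul_sin (ω * (x + θ)) (ω * (x - 1))
    have e1 : ω * (x + θ) - ω * (x - 1) = ω * (θ + 1) := by ring
    have e2 : ω * (x + θ) + ω * (x - 1) = ω * (2 * x + θ - 1) := by ring
    rw [e1, e2] at this
    linarith
  have h2 : ∀ x : ℝ, Real.sin (ω * (x + θ)) * Real.sin (ω * (x + 1)) =
      (Real.cos (ω * (θ - 1)) - Real.cos (ω * (2 * x + θ + 1))) / 2 := by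
    intro x
    have := Real.two_mul_sin_mul_sin (ω * (x + θ)) (ω * (x + 1))
    have e1 : ω * (x + θ) - ω * (x + 1) = ω * (θ - 1) := by ring
    have e2 : ω * (x + θ) + ω * (x + 1) = ω * (2 * x + θ + 1) := by ring
    rw [e1, e2] at this
    linarith
  simp only [h1, h2]
  have hi : ∀ a b c d : ℝ, IntervalIntegrable
      (fun x => (Real.cos c - Real.cos (ω * (2 * x + d))) / 2) MeasureTheory.volume a b := by
    intro a b c d
    exact ((continuous_const.sub ((Real.continuous_cos.comp
      (by fun_prop : Continuous fun x : ℝ => ω * (2 * x + d))))).div_const 2).intervalIntegrable a b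
  have key : (∫ x in (R - 1)..R,
      (Real.cos (ω * (θ - 1)) - Real.cos (ω * (2 * x + θ + 1))) / 2) =
      ∫ x in R..(R + 1),
      (Real.cos (ω * (θ - 1)) - Real.cos (ω * (2 * x + θ - 1))) / 2 := by
    have := intervalIntegral.integral_comp_sub_right
      (f := fun x => (Real.cos (ω * (θ - 1)) - Real.cos (ω * (2 * x + θ + 1))) / 2)
      (a := R) (b := R + 1) 1
    simp only [add_sub_cancel_right] at this
    rw [← this]
    congr 1
    ext x
    ring
  rw [key]
  have split : ∀ c : ℝ, (∫ x in R..(R + 1),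
      (Real.cos c - Real.cos (ω * (2 * x + θ - 1))) / 2) =
      Real.cos c / 2 - ∫ x in R..(R + 1), Real.cos (ω * (2 * x + θ - 1)) / 2 := by
    intro c
    have hc : IntervalIntegrable (fun _ : ℝ => Real.cos c / 2)
        MeasureTheory.volume R (R + 1) := intervalIntegrable_const
    have hcos : IntervalIntegrable (fun x => Real.cos (ω * (2 * x + θ - 1)) / 2)
        MeasureTheory.volume R (R + 1) :=
      ((Real.continuous_cos.comp (by fun_prop :
        Continuous fun x : ℝ => ω * (2 * x + θ - 1))).div_const 2).intervalIntegrable R (R + 1)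
    have : (∫ x in R..(R + 1), (Real.cos c - Real.cos (ω * (2 * x + θ - 1))) / 2) =
        ∫ x in R..(R + 1),
          (Real.cos c / 2 - Real.cos (ω * (2 * x + θ - 1)) / 2) := by
      congr 1; ext x; ring
    rw [this, intervalIntegral.integral_sub hc hcos,
      intervalIntegral.integral_const]
    simp
  rw [split, split]
  have : Real.cos (ω * (θ + 1)) - Real.cos (ω * (θ - 1)) =
      -2 * Real.sin (ω * θ) * Real.sin ω := by
    rw [Real.cos_sub_cos]
    congr 2 <;> ring
  linarith
end

section
/- Let a > 0, let ε ∈ (0, 1], let q be real with 0 < q ≤ min{ε/2, aε/2}, and let M ≥ 0. Suppose ς : ℝ → ℝ is measurable and satisfies ∫₀^∞ e^{2aεs}·|ς(s) − ε²σ(εs)|² ds ≤ M²ε⁷, where σ(x) = (1/4)·sech²(x/2). Then ∫₀^∞ e^{qs}·|ς(s)| ds ≤ 2ε + (M/√a)·ε³. -/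
open MeasureTheory Real Set Filter

lemma lintegral_exp_neg_Ioi' (c : ℝ) (hc : 0 < c) :
    ∫⁻ s in Set.Ioi (0:ℝ), ENNReal.ofReal (Real.exp (-c * s)) = ENNReal.ofReal (1/c) := by
  have hint : IntegrableOn (fun s : ℝ => Real.exp (-c * s)) (Set.Ioi 0) :=
    exp_neg_integrableOn_Ioi 0 hc
  have hderiv : ∀ x ∈ Set.Ici (0:ℝ),
      HasDerivAt (fun s : ℝ => -Real.exp (-c * s) / c) (Real.exp (-c * x)) x := by
    intro x _
    have h1 : HasDerivAt (fun s : ℝ => -c * s) (-c) x := by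
      simpa using (hasDerivAt_id x).const_mul (-c)
    have h2 := ((h1.exp).neg).div_const c
    convert h2 using 1
    · rfl
    · rfl
    · rfl
    · rw [mul_neg, neg_neg, mul_div_assoc, div_self hc.ne', mul_one]
  have htend : Tendsto (fun s : ℝ => -Real.exp (-c * s) / c) atTop (nhds 0) := by
    have h0 : Tendsto (fun s : ℝ => -c * s) atTop atBot := by
      have := Tendsto.const_mul_atTop hc (tendsto_id (α := ℝ))
      simpa [neg_mul] using (tendsto_neg_atBot_iff.mpr this)
    have h1 : Tendsto (fun s : ℝ => Real.exp (-c * s)) atTop (nhds 0) :=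
      Real.tendsto_exp_atBot.comp h0
    simpa using (h1.neg).div_const c
  have hI : (∫ s in Set.Ioi (0:ℝ), Real.exp (-c * s)) = 1 / c := by
    have := integral_Ioi_of_hasDerivAt_of_tendsto' hderiv hint htend
    rw [this]; simp; field_simp
  rw [← ofReal_integral_eq_lintegral_ofReal hint]
  · rw [hI]
  · exact Filter.Eventually.of_forall fun x => (Real.exp_pos _).le

lemma sech_sq_le' (x : ℝ) : 1/4 * (1 / Real.cosh x)^2 ≤ Real.exp (-(2*x)) := by
  have h1 : 0 < Real.cosh x := Real.cosh_pos x
  have h2 : Real.exp x / 2 ≤ Real.cosh x := by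
    rw [Real.cosh_eq]; nlinarith [Real.exp_pos (-x)]
  have h3 : 1 / Real.cosh x ≤ 2 * Real.exp (-x) := by
    have h3a : 1 / Real.cosh x ≤ 1 / (Real.exp x / 2) :=
      one_div_le_one_div_of_le (by positivity) h2
    have h3b : 1 / (Real.exp x / 2) = 2 * Real.exp (-x) := by
      rw [Real.exp_neg]; field_simp
    linarith
  have h4 : (1 / Real.cosh x)^2 ≤ (2 * Real.exp (-x))^2 := by
    apply pow_le_pow_left₀ (by positivity) h3
  have h5 : Real.exp (-x) * Real.exp (-x) = Real.exp (-(2*x)) := by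
    rw [← Real.exp_add]; ring_nf
  nlinarith [Real.exp_pos (-x)]


/-- One-sided weighted `L¹` bound for the solitary wave: if
`∫₀^∞ e^{2aεs}|ς(s) - ε²σ(εs)|² ds ≤ M²ε⁷` with `σ(x) = (1/4)sech²(x/2)`,
then `∫₀^∞ e^{qs}|ς(s)| ds ≤ 2ε + (M/√a)ε³` for `0 < q ≤ min(ε/2, aε/2)`. -/
theorem weighted_L1_bound_solitary_wave (a ε q M : ℝ) (ς : ℝ → ℝ)
    (ha : 0 < a) (hε0 : 0 < ε) (hε1 : ε ≤ 1)
    (hq0 : 0 < q) (hq : q ≤ min (ε / 2) (a * ε / 2)) (hM : 0 ≤ M)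
    (hmeas : Measurable ς)
    (hς : ∫⁻ s in Set.Ioi (0 : ℝ), ENNReal.ofReal
        (Real.exp (2 * a * ε * s) *
          |ς s - ε ^ 2 * (1 / 4 * (1 / Real.cosh (ε * s / 2)) ^ 2)| ^ 2)
      ≤ ENNReal.ofReal (M ^ 2 * ε ^ 7)) :
    ∫⁻ s in Set.Ioi (0 : ℝ), ENNReal.ofReal (Real.exp (q * s) * |ς s|)
      ≤ ENNReal.ofReal (2 * ε + M / Real.sqrt a * ε ^ 3) := by
  have hqε : q ≤ ε / 2 := le_trans hq (min_le_left _ _)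
  have hqaε : q ≤ a * ε / 2 := le_trans hq (min_le_right _ _)
  have haε : 0 < a * ε := mul_pos ha hε0
  have hεq : 0 < ε - q := by linarith
  have haεq : 0 < a * ε - q := by linarith
  set Δ : ℝ → ℝ := fun s => ς s - ε ^ 2 * (1 / 4 * (1 / Real.cosh (ε * s / 2)) ^ 2) with hΔdef
  have hΔmeas : Measurable Δ := by
    apply hmeas.sub
    fun_prop
  -- pointwise bound
  have key : ∀ s : ℝ, ENNReal.ofReal (Real.exp (q*s) * |ς s|)
      ≤ ENNReal.ofReal (Real.exp (q*s) * |Δ s|) + ENNReal.ofReal (ε^2 * Real.exp (-(ε-q) * s)) := by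
    intro s
    rw [← ENNReal.ofReal_add (by positivity) (by positivity)]
    apply ENNReal.ofReal_le_ofReal
    set σs : ℝ := ε ^ 2 * (1 / 4 * (1 / Real.cosh (ε * s / 2)) ^ 2) with hσsdef
    have hσnn : 0 ≤ σs := by positivity
    have h1 : |ς s| ≤ |Δ s| + σs := by
      have hid : Δ s + σs = ς s := by simp only [hΔdef, hσsdef]; ring
      calc |ς s| = |Δ s + σs| := by rw [hid]
        _ ≤ |Δ s| + |σs| := abs_add_le _ _
        _ = |Δ s| + σs := by rw [abs_of_nonneg hσnn]
    have h2 : σs ≤ ε^2 * Real.exp (-(ε * s)) := by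
      have h := sech_sq_le' (ε*s/2)
      have h2x : -(2*(ε*s/2)) = -(ε*s) := by ring
      rw [h2x] at h
      exact mul_le_mul_of_nonneg_left h (by positivity)
    have h3 : Real.exp (q*s) * σs ≤ ε^2 * Real.exp (-(ε-q)*s) := by
      calc Real.exp (q*s) * σs ≤ Real.exp (q*s) * (ε^2 * Real.exp (-(ε*s))) :=
            mul_le_mul_of_nonneg_left h2 (Real.exp_pos _).le
        _ = ε^2 * Real.exp (-(ε-q)*s) := by
            rw [mul_left_comm, ← Real.exp_add, show q*s + -(ε*s) = -(ε-q)*s by ring]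
    have h4 := mul_le_mul_of_nonneg_left h1 (Real.exp_pos (q*s)).le
    nlinarith
  have hmeas1 : Measurable fun s : ℝ => ENNReal.ofReal (Real.exp (q*s) * |Δ s|) := by
    apply Measurable.ennreal_ofReal
    fun_prop
  -- second integral bound
  have hI2 : (∫⁻ s in Set.Ioi (0:ℝ), ENNReal.ofReal (ε^2 * Real.exp (-(ε-q) * s)))
      ≤ ENNReal.ofReal (2 * ε) := by
    have : ∀ s : ℝ, ENNReal.ofReal (ε^2 * Real.exp (-(ε-q) * s))
        = ENNReal.ofReal (ε^2) * ENNReal.ofReal (Real.exp (-(ε-q) * s)) := fun s =>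
      ENNReal.ofReal_mul (by positivity)
    simp_rw [this]
    rw [lintegral_const_mul' _ _ ENNReal.ofReal_ne_top, lintegral_exp_neg_Ioi' (ε-q) hεq,
      ← ENNReal.ofReal_mul (by positivity)]
    apply ENNReal.ofReal_le_ofReal
    rw [mul_one_div, div_le_iff₀ hεq]
    nlinarith
  -- first integral: Cauchy-Schwarz
  have hI1 : (∫⁻ s in Set.Ioi (0:ℝ), ENNReal.ofReal (Real.exp (q*s) * |Δ s|))
      ≤ ENNReal.ofReal (M / Real.sqrt a * ε ^ 3) := by
    set f : ℝ → ENNReal := fun s => ENNReal.ofReal (Real.exp ((q - a*ε) * s)) with hfdef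
    set g : ℝ → ENNReal := fun s => ENNReal.ofReal (Real.exp (a*ε*s) * |Δ s|) with hgdef
    have hfg : ∀ s : ℝ, ENNReal.ofReal (Real.exp (q*s) * |Δ s|) = (f * g) s := by
      intro s
      simp only [hfdef, hgdef, Pi.mul_apply]
      rw [← ENNReal.ofReal_mul (Real.exp_pos _).le, ← mul_assoc, ← Real.exp_add,
        show (q - a*ε)*s + a*ε*s = q*s by ring]
    have hfm : AEMeasurable f (volume.restrict (Set.Ioi (0:ℝ))) := by
      apply Measurable.aemeasurable; apply Measurable.ennreal_ofReal; fun_prop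
    have hgm : AEMeasurable g (volume.restrict (Set.Ioi (0:ℝ))) := by
      apply Measurable.aemeasurable; apply Measurable.ennreal_ofReal; fun_prop
    have hpq : Real.HolderConjugate 2 2 := Real.HolderConjugate.two_two
    have holder := ENNReal.lintegral_mul_le_Lp_mul_Lq (volume.restrict (Set.Ioi (0:ℝ))) hpq hfm hgm
    have hf2 : (∫⁻ s in Set.Ioi (0:ℝ), f s ^ (2:ℝ)) = ENNReal.ofReal (1/(2*(a*ε - q))) := by
      have : ∀ s : ℝ, f s ^ (2:ℝ) = ENNReal.ofReal (Real.exp (-(2*(a*ε - q)) * s)) := by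
        intro s
        simp only [hfdef]
        rw [ENNReal.ofReal_rpow_of_nonneg (Real.exp_pos _).le (by norm_num),
          ← Real.exp_mul, show (q - a*ε)*s*2 = -(2*(a*ε - q)) * s by ring]
      simp_rw [this]
      exact lintegral_exp_neg_Ioi' _ (by linarith)
    have hg2 : (∫⁻ s in Set.Ioi (0:ℝ), g s ^ (2:ℝ)) ≤ ENNReal.ofReal (M^2 * ε^7) := by
      have : ∀ s : ℝ, g s ^ (2:ℝ)
          = ENNReal.ofReal (Real.exp (2*a*ε*s) * |Δ s| ^ 2) := by
        intro s
        simp only [hgdef]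
        rw [ENNReal.ofReal_rpow_of_nonneg (by positivity) (by norm_num),
          show (2:ℝ) = ((2:ℕ):ℝ) by norm_num, Real.rpow_natCast, mul_pow,
          ← Real.exp_nat_mul, show ((2:ℕ):ℝ) * (a*ε*s) = 2*a*ε*s by push_cast; ring]
        norm_num
      simp_rw [this]
      exact hς
    calc (∫⁻ s in Set.Ioi (0:ℝ), ENNReal.ofReal (Real.exp (q*s) * |Δ s|))
        = ∫⁻ s in Set.Ioi (0:ℝ), (f * g) s := by simp_rw [hfg]
      _ ≤ (∫⁻ s in Set.Ioi (0:ℝ), f s ^ (2:ℝ)) ^ ((1:ℝ)/2)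
          * (∫⁻ s in Set.Ioi (0:ℝ), g s ^ (2:ℝ)) ^ ((1:ℝ)/2) := holder
      _ ≤ (ENNReal.ofReal (1/(a*ε))) ^ ((1:ℝ)/2) * (ENNReal.ofReal (M^2*ε^7)) ^ ((1:ℝ)/2) := by
          apply mul_le_mul'
          · apply ENNReal.rpow_le_rpow _ (by norm_num)
            rw [hf2]
            apply ENNReal.ofReal_le_ofReal
            apply one_div_le_one_div_of_le haε
            linarith
          · exact ENNReal.rpow_le_rpow hg2 (by norm_num)
      _ ≤ ENNReal.ofReal (M / Real.sqrt a * ε ^ 3) := by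
          rw [ENNReal.ofReal_rpow_of_nonneg (by positivity) (by norm_num),
            ENNReal.ofReal_rpow_of_nonneg (by positivity) (by norm_num),
            ← ENNReal.ofReal_mul (by positivity)]
          apply ENNReal.ofReal_le_ofReal
          rw [← Real.sqrt_eq_rpow, ← Real.sqrt_eq_rpow]
          have hsε : 0 < Real.sqrt ε := Real.sqrt_pos.mpr hε0
          have hsa : 0 < Real.sqrt a := Real.sqrt_pos.mpr ha
          have ea : Real.sqrt (1/(a*ε)) = 1/(Real.sqrt a * Real.sqrt ε) := by
            rw [one_div, Real.sqrt_inv, Real.sqrt_mul ha.le, one_div]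
          have eb : Real.sqrt (M^2*ε^7) = (M*ε^3) * Real.sqrt ε := by
            rw [show M^2*ε^7 = (M*ε^3)^2*ε by ring, Real.sqrt_mul (sq_nonneg _),
              Real.sqrt_sq (mul_nonneg hM (by positivity))]
          rw [ea, eb]
          apply le_of_eq
          field_simp
  calc ∫⁻ s in Set.Ioi (0:ℝ), ENNReal.ofReal (Real.exp (q * s) * |ς s|)
      ≤ ∫⁻ s in Set.Ioi (0:ℝ), (ENNReal.ofReal (Real.exp (q*s) * |Δ s|)
          + ENNReal.ofReal (ε^2 * Real.exp (-(ε-q) * s))) := lintegral_mono key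
    _ = (∫⁻ s in Set.Ioi (0:ℝ), ENNReal.ofReal (Real.exp (q*s) * |Δ s|))
          + ∫⁻ s in Set.Ioi (0:ℝ), ENNReal.ofReal (ε^2 * Real.exp (-(ε-q) * s)) :=
        lintegral_add_left hmeas1 _
    _ ≤ ENNReal.ofReal (M / Real.sqrt a * ε ^ 3) + ENNReal.ofReal (2 * ε) := add_le_add hI1 hI2
    _ = ENNReal.ofReal (2 * ε + M / Real.sqrt a * ε ^ 3) := by
        rw [← ENNReal.ofReal_add (by positivity) (by positivity)]
        ring_nf
end
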